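/- arXiv:1309.1305 — 3 statements merged into one kernel-verified Lean document; each statement's English description precedes it below -/
import Mathlib

section
/- Optimality of the harmonic flow: for the Markov chain Y associated with the harmonic flow Φ_AB one has τ_B^Y < ∞ P^{Φ_AB}-almost surely, the stopped paths (Y_0,…,Y_{τ_B^Y}) are self-avoiding almost surely, and equality holds in the Berman-Konsowa bound: E^{Φ_AB}[ ( Σ_{n=1}^{τ_B^Y} (dΦ_AB/dK)(Y_{n−1},Y_n) )^{-1} ] = Cap(A,B). -/
open MeasureTheory ProbabilityTheory ENNReal Set Filter
open scoped Classical

noncomputable section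

variable {Ω : Type*}

/-- The Dirichlet form `E(h) = (1/2) ∫ (h(y)-h(x))² K(dx,dy)` (in `ℝ≥0∞`). -/
def dirichletForm [MeasurableSpace Ω] (K : Measure (Ω × Ω)) (h : Ω → ℝ) : ℝ≥0∞ :=
  2⁻¹ * ∫⁻ p, ENNReal.ofReal ((h p.2 - h p.1) ^ 2) ∂K

/-- The class `V_AB` of test potentials. -/
def VAB [MeasurableSpace Ω] (A B : Set Ω) (K : Measure (Ω × Ω)) : Set (Ω → ℝ) :=
  {h | Measurable h ∧ (∀ x ∈ A, h x = 1) ∧ (∀ x ∈ B, h x = 0) ∧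
    (∀ x, 0 ≤ h x ∧ h x ≤ 1) ∧ dirichletForm K h < ⊤}

/-- The capacity `Cap(A,B)`, defined by the Dirichlet principle. -/
def Cap [MeasurableSpace Ω] (A B : Set Ω) (K : Measure (Ω × Ω)) : ℝ≥0∞ :=
  ⨅ h ∈ VAB A B K, dirichletForm K h

/-- Finite paths `(γ₀, …, γ_{n+1})` with at least one edge. -/
abbrev PathSpace (Ω : Type*) := Σ n : ℕ, Fin (n + 2) → Ω

/-- The set `Γ_AB` of finite paths from `A` to `B` not touching `B` before the end. -/
def GammaAB (A B : Set Ω) : Set (PathSpace Ω) :=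
  {γ | γ.2 0 ∈ A ∧ γ.2 (Fin.last (γ.1 + 1)) ∈ B ∧
    ∀ i : Fin (γ.1 + 2), 0 < (i : ℕ) → (i : ℕ) < γ.1 + 1 → γ.2 i ∉ B}

/-- Sum of `g` over the (directed) edges of the path `γ`. -/
def pathSum (g : Ω × Ω → ℝ≥0∞) (γ : PathSpace Ω) : ℝ≥0∞ :=
  ∑ j : Fin (γ.1 + 1), g (γ.2 j.castSucc, γ.2 j.succ)

/-- `Φ` is the edge measure `Φ_P` of the path measure `P`. -/
def IsEdgeMeasure [MeasurableSpace Ω] (P : Measure (PathSpace Ω)) (Φ : Measure (Ω × Ω)) : Prop :=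
  ∀ g : Ω × Ω → ℝ≥0∞, Measurable g → ∫⁻ p, g p ∂Φ = ∫⁻ γ, pathSum g γ ∂P

/-- `Φ` is a unit flow from `A` to `B`. -/
def IsUnitFlow [MeasurableSpace Ω] (A B : Set Ω) (Φ : Measure (Ω × Ω)) : Prop :=
  SigmaFinite Φ ∧
  Φ (A ×ˢ univ) = 1 ∧ Φ (univ ×ˢ A) = 0 ∧
  Φ (univ ×ˢ B) = 1 ∧ Φ (B ×ˢ univ) = 0 ∧
  (∀ C : Set Ω, MeasurableSet C → C ⊆ (A ∪ B)ᶜ → Φ (C ×ˢ univ) = Φ (univ ×ˢ C)) ∧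
  ∃ χ : Set (Ω × Ω), MeasurableSet χ ∧ Φ χᶜ = 0 ∧ ∀ x y : Ω, (x, y) ∈ χ → (y, x) ∉ χ

/-- `χ` contains no loops. -/
def NoLoops (χ : Set (Ω × Ω)) : Prop :=
  ∀ (n : ℕ) (γ : Fin (n + 2) → Ω), γ (Fin.last (n + 1)) = γ 0 →
    ∃ j : Fin (n + 1), (γ j.castSucc, γ j.succ) ∉ χ

/-- `Φ` is a loop-free unit flow from `A` to `B`. -/
def IsLoopFreeUnitFlow [MeasurableSpace Ω] (A B : Set Ω) (Φ : Measure (Ω × Ω)) : Prop :=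
  IsUnitFlow A B Φ ∧
  ∃ χ : Set (Ω × Ω), MeasurableSet χ ∧ Φ χᶜ = 0 ∧
    (∀ x y : Ω, (x, y) ∈ χ → (y, x) ∉ χ) ∧ NoLoops χ

/-- `Φ(dx,dy) = ν(dx) ℓ(x,dy)` with `ν = Φ.fst` the left marginal. -/
def Disintegrates [MeasurableSpace Ω] (Φ : Measure (Ω × Ω)) (ℓ : Kernel Ω Ω) : Prop :=
  ∀ g : Ω × Ω → ℝ≥0∞, Measurable g →
    ∫⁻ p, g p ∂Φ = ∫⁻ x, ∫⁻ y, g (x, y) ∂(ℓ x) ∂Φ.fst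

/-- Finite-dimensional distributions of the Markov chain with initial law `μ0` and kernel `ℓ`. -/
def fdd [MeasurableSpace Ω] (μ0 : Measure Ω) (ℓ : Kernel Ω Ω) :
    (n : ℕ) → Measure (Fin (n + 1) → Ω)
  | 0 => μ0.map (fun x => fun _ => x)
  | n + 1 => (fdd μ0 ℓ n).bind (fun p => (ℓ (p (Fin.last n))).map (Fin.snoc p))

/-- `P` is the law of the Markov chain with initial law `μ0` and transition kernel `ℓ`. -/
def IsChainLaw [MeasurableSpace Ω] (μ0 : Measure Ω) (ℓ : Kernel Ω Ω)
    (P : Measure (ℕ → Ω)) : Prop :=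
  IsProbabilityMeasure P ∧
  ∀ n : ℕ, P.map (fun ω (i : Fin (n + 1)) => ω (i : ℕ)) = fdd μ0 ℓ n

/-- `Σ_{n=1}^{τ_B} g(Y_{n-1}, Y_n)`, where `τ_B = min{n ≥ 1 : Y_n ∈ B}`. -/
def stoppedSum (B : Set Ω) (g : Ω × Ω → ℝ≥0∞) (ω : ℕ → Ω) : ℝ≥0∞ :=
  ∑' n : ℕ, if ∀ m, 1 ≤ m → m ≤ n → ω m ∉ B then g (ω n, ω (n + 1)) else 0

/-- The event `τ_B < ∞`. -/
def HitsB (B : Set Ω) (ω : ℕ → Ω) : Prop := ∃ n : ℕ, 1 ≤ n ∧ ω n ∈ B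

/-- `τ_B`, viewed in `ℝ≥0∞`. -/
def hitTimeE (B : Set Ω) (ω : ℕ → Ω) : ℝ≥0∞ :=
  ∑' n : ℕ, if ∀ m, 1 ≤ m → m ≤ n → ω m ∉ B then 1 else 0

/-- The Berman-Konsowa functional `E^Φ[ (Σ_{n=1}^{τ_B} g(Y_{n-1},Y_n))⁻¹ ]`, with the
reciprocal taken to be `0` on `{τ_B = ∞}` (and automatically `0` when the sum is infinite). -/
def bkValue [MeasurableSpace Ω] (B : Set Ω) (g : Ω × Ω → ℝ≥0∞)
    (P : Measure (ℕ → Ω)) : ℝ≥0∞ :=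
  ∫⁻ ω, (if HitsB B ω then (stoppedSum B g ω)⁻¹ else 0) ∂P

end

/-- Minus the generator: `(-Lh)(x) = ∫ (h(x) - h(y)) k(x,dy)`. -/
noncomputable def negL {Ω : Type*} [MeasurableSpace Ω] (k : Kernel Ω Ω) (h : Ω → ℝ) (x : Ω) : ℝ :=
  ∫ y, (h x - h y) ∂(k x)

/-- The harmonic flow `Φ_AB(dx,dy) = c⁻¹ [h(x) - h(y)]₊ K(dx,dy)` (with `c = Cap(A,B)`). -/
noncomputable def harmonicFlow {Ω : Type*} [MeasurableSpace Ω] (K : Measure (Ω × Ω))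
    (c : ℝ≥0∞) (h : Ω → ℝ) : Measure (Ω × Ω) :=
  K.withDensity fun p => c⁻¹ * ENNReal.ofReal (h p.1 - h p.2)


section Aux

open ProbabilityTheory

variable {Ω : Type*} [MeasurableSpace Ω]

lemma kernel_isSFinite (k : Kernel Ω Ω) (hk : ∀ x, k x Set.univ < ⊤) :
    IsSFiniteKernel k := by
  classical
  set s : ℕ → Set Ω := fun n => {x | (n : ℝ≥0∞) ≤ k x Set.univ ∧ k x Set.univ < n + 1} with hs
  have hmeas : ∀ n, MeasurableSet (s n) := by
    intro n
    have h1 : Measurable fun x => k x Set.univ := Kernel.measurable_coe k MeasurableSet.univ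
    have : s n = (fun x => k x Set.univ) ⁻¹' (Set.Ico (n : ℝ≥0∞) (n + 1)) := rfl
    rw [this]
    exact h1 measurableSet_Ico
  set seq : ℕ → Kernel Ω Ω := fun n => Kernel.piecewise (hmeas n) k 0 with hseq
  have hfin : ∀ n, IsFiniteKernel (seq n) := by
    intro n
    refine ⟨⟨(n : ℝ≥0∞) + 1, by simp [ENNReal.add_lt_top], fun x => ?_⟩⟩
    by_cases hx : x ∈ s n
    · simp only [hseq, Kernel.piecewise_apply, if_pos hx]
      exact le_of_lt hx.2
    · simp [hseq, Kernel.piecewise_apply, if_neg hx]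
  have hsum : k = Kernel.sum seq := by
    ext x D hD
    obtain ⟨n₀, hn₀, hn₀uniq⟩ : ∃ n₀, x ∈ s n₀ ∧ ∀ m, m ≠ n₀ → x ∉ s m := by
      have hex : ∃ n : ℕ, k x Set.univ < (n : ℝ≥0∞) + 1 := by
        obtain ⟨n, hn⟩ := ENNReal.exists_nat_gt (hk x).ne
        exact ⟨n, lt_of_lt_of_le hn (by simp)⟩
      set n₀ := Nat.find hex with hn₀def
      have h1 : k x Set.univ < (n₀ : ℝ≥0∞) + 1 := Nat.find_spec hex
      have h2 : (n₀ : ℝ≥0∞) ≤ k x Set.univ := by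
        rcases Nat.eq_zero_or_pos n₀ with h | h
        · simp [h]
        · obtain ⟨m, hm⟩ := Nat.exists_eq_succ_of_ne_zero h.ne'
          have h3 := Nat.find_min hex (m := m) (by omega)
          push_neg at h3
          rw [hm]
          calc ((m + 1 : ℕ) : ℝ≥0∞) = (m : ℝ≥0∞) + 1 := by push_cast; ring
          _ ≤ k x Set.univ := h3
      refine ⟨n₀, ⟨h2, h1⟩, fun m hm hmem => ?_⟩
      rcases lt_or_gt_of_ne hm with h | h
      · exact Nat.find_min hex h hmem.2
      · have : (n₀ : ℝ≥0∞) + 1 ≤ (m : ℝ≥0∞) := by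
          have : (n₀ + 1 : ℕ) ≤ m := h
          exact_mod_cast this
        exact absurd (le_trans this hmem.1) (not_le.mpr h1)
    rw [Kernel.sum_apply, Measure.sum_apply _ hD]
    rw [tsum_eq_single n₀ (by
      intro m hm
      simp [hseq, Kernel.piecewise_apply, if_neg (hn₀uniq m hm)])]
    simp [hseq, Kernel.piecewise_apply, if_pos hn₀]
  exact ⟨⟨seq, hfin, hsum⟩⟩

lemma measurable_initLast (n : ℕ) :
    Measurable (fun p : Fin (n + 2) → Ω => (Fin.init p, p (Fin.last (n + 1)))) := by
  refine Measurable.prodMk ?_ (measurable_pi_apply _)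
  exact measurable_pi_lambda (fun p : Fin (n + 2) → Ω => Fin.init p)
    (fun i => measurable_pi_apply i.castSucc)

lemma measurable_snocFun (n : ℕ) :
    Measurable (fun q : (Fin (n + 1) → Ω) × Ω => (Fin.snoc q.1 q.2 : Fin (n + 2) → Ω)) := by
  refine measurable_pi_lambda _ (fun i => ?_)
  refine Fin.lastCases ?_ ?_ i
  · simpa [Fin.snoc_last] using measurable_snd
  · intro j
    simpa [Fin.snoc_castSucc, Function.comp_def] using (measurable_pi_apply j).comp measurable_fst

lemma measurable_snoc_fixed (n : ℕ) (q : Fin (n + 1) → Ω) :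
    Measurable (fun y : Ω => (Fin.snoc q y : Fin (n + 2) → Ω)) := by
  have : (fun y : Ω => (Fin.snoc q y : Fin (n + 2) → Ω)) =
      (fun r : (Fin (n + 1) → Ω) × Ω => (Fin.snoc r.1 r.2 : Fin (n + 2) → Ω)) ∘ (fun y => (q, y)) :=
    rfl
  rw [this]
  exact (measurable_snocFun n).comp (measurable_const.prodMk measurable_id)

lemma fdd_succ_apply (μ0 : Measure Ω) (ℓ : Kernel Ω Ω) [IsMarkovKernel ℓ] (n : ℕ)
    (S : Set ((Fin (n + 1) → Ω) × Ω)) (hS : MeasurableSet S) :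
    fdd μ0 ℓ (n + 1) {p | (Fin.init p, p (Fin.last (n + 1))) ∈ S} =
      ∫⁻ q, ℓ (q (Fin.last n)) (Prod.mk q ⁻¹' S) ∂(fdd μ0 ℓ n) := by
  classical
  have hmeasF : Measurable (fun p : Fin (n + 1) → Ω =>
      (ℓ (p (Fin.last n))).map (fun y => (Fin.snoc p y : Fin (n + 2) → Ω))) := by
    refine Measure.measurable_of_measurable_coe _ (fun T hT => ?_)
    have heq : ∀ p : Fin (n + 1) → Ω,
        ((ℓ (p (Fin.last n))).map (fun y => (Fin.snoc p y : Fin (n + 2) → Ω))) T = ℓ (p (Fin.last n))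
          (Prod.mk p ⁻¹' ((fun r : (Fin (n + 1) → Ω) × Ω =>
            (Fin.snoc r.1 r.2 : Fin (n + 2) → Ω)) ⁻¹' T)) := by
      intro p
      rw [Measure.map_apply (measurable_snoc_fixed n p) hT]
      rfl
    simp_rw [heq]
    have hT' : MeasurableSet ((fun r : (Fin (n + 1) → Ω) × Ω =>
        (Fin.snoc r.1 r.2 : Fin (n + 2) → Ω)) ⁻¹' T) := (measurable_snocFun n) hT
    exact (Kernel.measurable_kernel_prodMk_left
      (κ := ℓ.comap (fun q : Fin (n + 1) → Ω => q (Fin.last n)) (measurable_pi_apply _)) hT')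
  have hSset : MeasurableSet {p : Fin (n + 2) → Ω | (Fin.init p, p (Fin.last (n + 1))) ∈ S} :=
    (measurable_initLast n) hS
  have : fdd μ0 ℓ (n + 1) = (fdd μ0 ℓ n).bind
      (fun p => (ℓ (p (Fin.last n))).map (fun y => (Fin.snoc p y : Fin (n + 2) → Ω))) := rfl
  rw [this, Measure.bind_apply hSset hmeasF.aemeasurable]
  refine lintegral_congr (fun q => ?_)
  rw [Measure.map_apply (measurable_snoc_fixed n q) hSset]
  congr 1
  ext y
  simp [Fin.init_snoc, Fin.snoc_last]

end Aux

/-- **Optimality of the harmonic flow: the associated chain hits `B` almost surely, its stopped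
paths are self-avoiding, and it attains equality in the Berman-Konsowa bound.** -/
theorem harmonicFlow_optimal
    {Ω : Type*} [MeasurableSpace Ω] [TopologicalSpace Ω] [PolishSpace Ω] [BorelSpace Ω]
    (k : Kernel Ω Ω) (hk : ∀ x, k x univ < ⊤)
    (μ : Measure Ω) [SigmaFinite μ]
    (K : Measure (Ω × Ω)) [IsFiniteMeasure K] (hK0 : K ≠ 0)
    (hKrep : ∀ C D : Set Ω, MeasurableSet C → MeasurableSet D →
      K (C ×ˢ D) = ∫⁻ x in C, k x D ∂μ)
    (hKsym : ∀ C D : Set Ω, MeasurableSet C → MeasurableSet D → K (C ×ˢ D) = K (D ×ˢ C))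
    (A B : Set Ω) (hA : MeasurableSet A) (hB : MeasurableSet B) (hd : Disjoint A B)
    (hμA : 0 < μ A) (hμB : 0 < μ B)
    (hne : (VAB A B K).Nonempty) (hCap : 0 < Cap A B K)
    (hAB : Ω → ℝ) (hABmem : hAB ∈ VAB A B K) (hABmin : dirichletForm K hAB = Cap A B K)
    (hABharm : ∀ᵐ x ∂(μ.restrict ((A ∪ B)ᶜ)), negL k hAB x = 0)
    (hABcharge : ∫ x in A, negL k hAB x ∂μ = (Cap A B K).toReal)
    (ℓ : Kernel Ω Ω) (hℓ : IsMarkovKernel ℓ)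
    (hdis : Disintegrates (harmonicFlow K (Cap A B K) hAB) ℓ)
    (P : Measure (ℕ → Ω))
    (hP : IsChainLaw ((harmonicFlow K (Cap A B K) hAB).fst.restrict A) ℓ P) :
    (∀ᵐ ω ∂P, HitsB B ω) ∧
    (∀ᵐ ω ∂P, ∀ i j : ℕ, i < j → (∀ m : ℕ, 1 ≤ m → m < j → ω m ∉ B) → ω i ≠ ω j) ∧
    bkValue B ((harmonicFlow K (Cap A B K) hAB).rnDeriv K) P = Cap A B K := by
  classical
  haveI := hℓ
  haveI : ProbabilityTheory.IsSFiniteKernel k := kernel_isSFinite k hk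
  obtain ⟨hmeas_h, hA1, hB0, h01, hdfin⟩ := hABmem
  set c := Cap A B K with hc
  have hc0 : c ≠ 0 := hCap.ne'
  have hcT : c ≠ ⊤ := by rw [← hABmin]; exact hdfin.ne
  have hcinvT : c⁻¹ ≠ ⊤ := by simp [hc0]
  set g0 : Ω × Ω → ℝ≥0∞ := fun p => ENNReal.ofReal (hAB p.1 - hAB p.2) with hg0
  have hg0meas : Measurable g0 :=
    ((hmeas_h.comp measurable_fst).sub (hmeas_h.comp measurable_snd)).ennreal_ofReal
  set f : Ω × Ω → ℝ≥0∞ := fun p => c⁻¹ * g0 p with hf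
  have hfmeas : Measurable f := measurable_const.mul hg0meas
  set Φ := harmonicFlow K c hAB with hΦ
  have hΦdef : Φ = K.withDensity f := rfl
  have hg0le : ∀ p, g0 p ≤ 1 := by
    intro p
    exact ENNReal.ofReal_le_one.2 (by nlinarith [(h01 p.1).1, (h01 p.1).2, (h01 p.2).1, (h01 p.2).2])
  have hfle : ∀ p, f p ≤ c⁻¹ := fun p => by
    calc f p ≤ c⁻¹ * 1 := mul_le_mul_right (hg0le p) _
    _ = c⁻¹ := mul_one _
  haveI hΦfin : IsFiniteMeasure Φ := by
    constructor
    rw [hΦdef, withDensity_apply _ MeasurableSet.univ, Measure.restrict_univ]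
    calc ∫⁻ p, f p ∂K ≤ ∫⁻ _, c⁻¹ ∂K := lintegral_mono hfle
    _ = c⁻¹ * K univ := by rw [lintegral_const, mul_comm]
    _ < ⊤ := ENNReal.mul_lt_top (lt_of_le_of_ne le_top hcinvT) (measure_lt_top K univ)
  have hKcomp : K = μ.compProd k := by
    refine MeasureTheory.ext_of_generate_finite _ generateFrom_prod.symm isPiSystem_prod ?_ ?_
    · rintro s ⟨C, hC, D, hD, rfl⟩
      rw [hKrep C D hC hD, Measure.compProd_apply_prod hC hD]
    · rw [← Set.univ_prod_univ, hKrep _ _ MeasurableSet.univ MeasurableSet.univ,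
        Measure.compProd_apply_prod MeasurableSet.univ MeasurableSet.univ]
  have hKswap : K.map Prod.swap = K := by
    haveI : IsFiniteMeasure (K.map Prod.swap) := by
      constructor
      rw [Measure.map_apply measurable_swap MeasurableSet.univ]
      exact measure_lt_top K _
    refine MeasureTheory.ext_of_generate_finite _ generateFrom_prod.symm isPiSystem_prod ?_ ?_
    · rintro s ⟨C, hC, D, hD, rfl⟩
      rw [Measure.map_apply measurable_swap (hC.prod hD), Set.preimage_swap_prod, hKsym D C hD hC]
    · rw [Measure.map_apply measurable_swap MeasurableSet.univ]
      simp
  have hrepP : ∀ C : Set Ω, MeasurableSet C →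
      ∫⁻ p in C ×ˢ univ, ENNReal.ofReal (hAB p.1 - hAB p.2) ∂K
        = ∫⁻ x in C, ∫⁻ y, ENNReal.ofReal (hAB x - hAB y) ∂k x ∂μ := by
    intro C hC
    rw [hKcomp, Measure.setLIntegral_compProd hg0meas hC MeasurableSet.univ]
    simp [Measure.restrict_univ, hg0]
  have hrepN : ∀ C : Set Ω, MeasurableSet C →
      ∫⁻ p in C ×ˢ univ, ENNReal.ofReal (hAB p.2 - hAB p.1) ∂K
        = ∫⁻ x in C, ∫⁻ y, ENNReal.ofReal (hAB y - hAB x) ∂k x ∂μ := by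
    intro C hC
    have hg0meas' : Measurable (fun p : Ω × Ω => ENNReal.ofReal (hAB p.2 - hAB p.1)) :=
      Measurable.ennreal_ofReal ((hmeas_h.comp measurable_snd).sub (hmeas_h.comp measurable_fst))
    rw [hKcomp, Measure.setLIntegral_compProd hg0meas' hC MeasurableSet.univ]
    simp [Measure.restrict_univ]
  have hswapInt : ∀ C : Set Ω, MeasurableSet C →
      ∫⁻ p in univ ×ˢ C, ENNReal.ofReal (hAB p.1 - hAB p.2) ∂K
        = ∫⁻ p in C ×ˢ univ, ENNReal.ofReal (hAB p.2 - hAB p.1) ∂K := by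
    intro C hC
    conv_lhs => rw [← hKswap]
    rw [setLIntegral_map (MeasurableSet.univ.prod hC) hg0meas measurable_swap,
      Set.preimage_swap_prod]
    rfl
  have haeeq : ∀ C : Set Ω, MeasurableSet C → C ⊆ (A ∪ B)ᶜ →
      ∫⁻ x in C, ∫⁻ y, ENNReal.ofReal (hAB x - hAB y) ∂k x ∂μ
        = ∫⁻ x in C, ∫⁻ y, ENNReal.ofReal (hAB y - hAB x) ∂k x ∂μ := by
    intro C hC hCs
    refine lintegral_congr_ae ?_
    filter_upwards [ae_restrict_of_ae_restrict_of_subset hCs hABharm] with x hx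
    haveI : IsFiniteMeasure (k x) := ⟨hk x⟩
    have hint : Integrable (fun y => hAB x - hAB y) (k x) := by
      refine (integrable_const (1 : ℝ)).mono'
        ((measurable_const.sub hmeas_h).aestronglyMeasurable) ?_
      refine Filter.Eventually.of_forall fun y => ?_
      rw [Real.norm_eq_abs, abs_le]
      constructor <;> nlinarith [(h01 x).1, (h01 x).2, (h01 y).1, (h01 y).2]
    have heq := integral_eq_lintegral_pos_part_sub_lintegral_neg_part hint
    rw [negL] at hx
    rw [hx] at heq
    have hfin1 : ∫⁻ y, ENNReal.ofReal (hAB x - hAB y) ∂k x ≠ ⊤ := by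
      refine ne_of_lt (lt_of_le_of_lt (lintegral_mono fun y => ENNReal.ofReal_le_one.2
        (by nlinarith [(h01 x).1, (h01 x).2, (h01 y).1, (h01 y).2])) ?_)
      rw [lintegral_one]
      exact hk x
    have hfin2 : ∫⁻ y, ENNReal.ofReal (hAB y - hAB x) ∂k x ≠ ⊤ := by
      refine ne_of_lt (lt_of_le_of_lt (lintegral_mono fun y => ENNReal.ofReal_le_one.2
        (by nlinarith [(h01 x).1, (h01 x).2, (h01 y).1, (h01 y).2])) ?_)
      rw [lintegral_one]
      exact hk x
    have heq2 : ∫⁻ y, ENNReal.ofReal (-(hAB x - hAB y)) ∂k x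
        = ∫⁻ y, ENNReal.ofReal (hAB y - hAB x) ∂k x := by
      congr 1; ext y; rw [neg_sub]
    rw [heq2] at heq
    exact (ENNReal.toReal_eq_toReal_iff' hfin1 hfin2).1 (by linarith)
  have hcons : ∀ C : Set Ω, MeasurableSet C → C ⊆ (A ∪ B)ᶜ →
      Φ (C ×ˢ univ) = Φ (univ ×ˢ C) := by
    intro C hC hCs
    rw [hΦdef, withDensity_apply _ (hC.prod MeasurableSet.univ),
      withDensity_apply _ (MeasurableSet.univ.prod hC)]
    simp only [hf]
    rw [lintegral_const_mul _ hg0meas, lintegral_const_mul _ hg0meas]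
    congr 1
    rw [hg0]
    rw [hrepP C hC, hswapInt C hC, hrepN C hC, haeeq C hC hCs]
  -- the left marginal
  set ν := Φ.fst with hν
  have hν_apply : ∀ {D : Set Ω}, MeasurableSet D → ν D = Φ (D ×ˢ univ) := by
    intro D hD
    rw [hν, Measure.fst_apply hD, Set.prod_univ]
  have hνuniv : ν univ ≠ ⊤ := by
    rw [hν_apply MeasurableSet.univ]; exact (measure_lt_top Φ _).ne
  have hDnegm : MeasurableSet {p : Ω × Ω | hAB p.1 ≤ hAB p.2} :=
    measurableSet_le (hmeas_h.comp measurable_fst) (hmeas_h.comp measurable_snd)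
  have hΦDneg : Φ {p : Ω × Ω | hAB p.1 ≤ hAB p.2} = 0 := by
    rw [hΦdef, withDensity_apply _ hDnegm]
    rw [setLIntegral_congr_fun hDnegm (fun p hp => ?_)]
    · exact lintegral_zero
    · show f p = 0
      rw [hf]
      simp only
      rw [hg0]
      simp only
      rw [ENNReal.ofReal_eq_zero.2 (by simpa [sub_nonpos] using hp), mul_zero]
  have hΦsndA : Φ (univ ×ˢ A) = 0 := by
    refine measure_mono_null ?_ hΦDneg
    rintro ⟨x, y⟩ ⟨-, hy⟩
    show hAB x ≤ hAB y
    rw [hA1 y hy]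
    exact (h01 x).2
  have hF5 : ∀ D : Set (Ω × Ω), MeasurableSet D →
      ∫⁻ x, ℓ x (Prod.mk x ⁻¹' D) ∂ν = Φ D := by
    intro D hD
    have hind := hdis (D.indicator 1) (measurable_one.indicator hD)
    rw [lintegral_indicator_one hD] at hind
    rw [hind]
    refine lintegral_congr fun x => ?_
    have heq : (fun y => D.indicator (1 : Ω × Ω → ℝ≥0∞) (x, y))
        = (Prod.mk x ⁻¹' D).indicator 1 := by
      ext y
      simp [Set.indicator_apply, Set.mem_preimage]
    rw [heq, lintegral_indicator_one (measurable_prodMk_left hD)]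
  have hΦsnd_le : ∀ D : Set Ω, MeasurableSet D → Φ (univ ×ˢ (D ∩ Bᶜ)) ≤ ν D := by
    intro D hD
    have hsub : (D ∩ Bᶜ ∩ Aᶜ : Set Ω) ⊆ (A ∪ B)ᶜ := by
      rintro x ⟨⟨-, hxB⟩, hxA⟩
      simp [hxB, hxA]
    have hsplit : (univ ×ˢ (D ∩ Bᶜ) : Set (Ω × Ω))
        ⊆ (univ ×ˢ A) ∪ (univ ×ˢ (D ∩ Bᶜ ∩ Aᶜ)) := by
      rintro ⟨x, y⟩ ⟨-, hy⟩
      by_cases hyA : y ∈ A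
      · exact Or.inl ⟨trivial, hyA⟩
      · exact Or.inr ⟨trivial, hy, hyA⟩
    calc Φ (univ ×ˢ (D ∩ Bᶜ)) ≤ Φ (univ ×ˢ A) + Φ (univ ×ˢ (D ∩ Bᶜ ∩ Aᶜ)) :=
        le_trans (measure_mono hsplit) (measure_union_le _ _)
    _ = Φ ((D ∩ Bᶜ ∩ Aᶜ) ×ˢ univ) := by
        rw [hΦsndA, zero_add, (hcons _ ((hD.inter hB.compl).inter hA.compl) hsub).symm]
    _ = ν (D ∩ Bᶜ ∩ Aᶜ) := (hν_apply ((hD.inter hB.compl).inter hA.compl)).symm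
    _ ≤ ν D := measure_mono fun x hx => hx.1.1
  -- the chain
  set μ0 : Measure Ω := ν.restrict A with hμ0
  obtain ⟨hPprob, hPmap⟩ := hP
  set NH : (n : ℕ) → Set (Fin (n + 1) → Ω) :=
    fun n => {q | ∀ i : Fin (n + 1), 1 ≤ (i : ℕ) → q i ∉ B} with hNH
  have hNHm : ∀ n, MeasurableSet (NH n) := by
    intro n
    have heq : NH n = ⋂ i : Fin (n + 1), {q : Fin (n + 1) → Ω | 1 ≤ (i : ℕ) → q i ∉ B} := by
      ext q; simp [hNH]
    rw [heq]
    refine MeasurableSet.iInter fun i => ?_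
    by_cases hi : 1 ≤ (i : ℕ)
    · have heq2 : {q : Fin (n + 1) → Ω | 1 ≤ (i : ℕ) → q i ∉ B}
          = (fun q : Fin (n + 1) → Ω => q i) ⁻¹' Bᶜ := by
        ext q; simp [hi]
      rw [heq2]
      exact measurable_pi_apply i hB.compl
    · have heq2 : {q : Fin (n + 1) → Ω | 1 ≤ (i : ℕ) → q i ∉ B} = univ := by
        ext q; simp [hi]
      rw [heq2]
      exact MeasurableSet.univ
  set α : ℕ → Measure Ω :=
    fun n => ((fdd μ0 ℓ n).restrict (NH n)).map (fun q => q (Fin.last n)) with hα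
  have hα_apply : ∀ (n : ℕ) (D : Set Ω), MeasurableSet D →
      α n D = fdd μ0 ℓ n {q | q ∈ NH n ∧ q (Fin.last n) ∈ D} := by
    intro n D hD
    rw [hα]
    simp only
    rw [Measure.map_apply (measurable_pi_apply _) hD,
      Measure.restrict_apply ((measurable_pi_apply _) hD)]
    congr 1
    ext q
    simp only [Set.mem_inter_iff, Set.mem_preimage, Set.mem_setOf_eq]
    exact And.comm
  have hα0 : α 0 = μ0 := by
    ext D hD
    rw [hα_apply 0 D hD]
    have hNH0 : NH 0 = univ := by
      ext q
      simp only [hNH, Set.mem_setOf_eq, Set.mem_univ, iff_true]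
      intro i hi
      exact absurd hi (by have := i.isLt; omega)
    have heq : {q : Fin 1 → Ω | q ∈ NH 0 ∧ q (Fin.last 0) ∈ D}
        = (fun q : Fin 1 → Ω => q (Fin.last 0)) ⁻¹' D := by
      rw [hNH0]; ext q; simp
    rw [heq]
    show μ0.map (fun x => fun _ => x) _ = μ0 D
    have hconst : Measurable (fun (x : Ω) (_ : Fin 1) => x) :=
      measurable_pi_lambda _ fun _ => measurable_id
    rw [Measure.map_apply hconst ((measurable_pi_apply (Fin.last 0)) hD)]
    rfl
  have hrec : ∀ (n : ℕ) (D : Set Ω), MeasurableSet D →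
      α (n + 1) D = ∫⁻ x, ℓ x (D ∩ Bᶜ) ∂α n := by
    intro n D hD
    rw [hα_apply (n + 1) D hD]
    have hSm : MeasurableSet ((NH n) ×ˢ (D ∩ Bᶜ)) := (hNHm n).prod (hD.inter hB.compl)
    have hset : {q : Fin (n + 2) → Ω | q ∈ NH (n + 1) ∧ q (Fin.last (n + 1)) ∈ D}
        = {p : Fin (n + 2) → Ω |
            ((Fin.init p : Fin (n + 1) → Ω), p (Fin.last (n + 1))) ∈ (NH n) ×ˢ (D ∩ Bᶜ)} := by
      ext p
      simp only [Set.mem_setOf_eq, Set.mem_prod, Set.mem_inter_iff, Set.mem_compl_iff, hNH]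
      constructor
      · rintro ⟨hnh, hD'⟩
        exact ⟨fun i hi => hnh i.castSucc (by simpa using hi),
          hD', hnh (Fin.last (n + 1)) (by simp [Fin.last])⟩
      · rintro ⟨hnh, hD', hB'⟩
        refine ⟨?_, hD'⟩
        intro i
        refine Fin.lastCases (fun _ => hB') (fun j hj => ?_) i
        exact hnh j (by simpa using hj)
    rw [hset, fdd_succ_apply μ0 ℓ n _ hSm]
    have hind : ∀ q : Fin (n + 1) → Ω,
        ℓ (q (Fin.last n)) (Prod.mk q ⁻¹' ((NH n) ×ˢ (D ∩ Bᶜ)))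
          = (NH n).indicator (fun q => ℓ (q (Fin.last n)) (D ∩ Bᶜ)) q := by
      intro q
      by_cases hq : q ∈ NH n
      · rw [Set.indicator_of_mem hq]
        congr 1
        ext y
        simp [hq]
      · rw [Set.indicator_of_notMem hq]
        have hemp : Prod.mk q ⁻¹' ((NH n) ×ˢ (D ∩ Bᶜ)) = ∅ := by
          ext y; simp [hq]
        rw [hemp]
        simp
    simp_rw [hind]
    rw [lintegral_indicator (hNHm n), hα]
    simp only
    rw [lintegral_map (Kernel.measurable_coe ℓ (hD.inter hB.compl)) (measurable_pi_apply _)]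
  have hstep : ∀ (n : ℕ) (D : Set (Ω × Ω)), MeasurableSet D →
      fdd μ0 ℓ (n + 1) {p | Fin.init p ∈ NH n ∧
          (Fin.init p (Fin.last n), p (Fin.last (n + 1))) ∈ D}
        = ∫⁻ x, ℓ x (Prod.mk x ⁻¹' D) ∂α n := by
    intro n D hD
    have hmeasD : Measurable fun x => ℓ x (Prod.mk x ⁻¹' D) :=
      Kernel.measurable_kernel_prodMk_left hD
    set S : Set ((Fin (n + 1) → Ω) × Ω) :=
      {r | r.1 ∈ NH n ∧ (r.1 (Fin.last n), r.2) ∈ D} with hS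
    have hSm : MeasurableSet S := (measurable_fst (hNHm n)).inter
      ((((measurable_pi_apply (Fin.last n)).comp measurable_fst).prodMk measurable_snd) hD)
    have heq : {p : Fin (n + 2) → Ω | Fin.init p ∈ NH n ∧
        (Fin.init p (Fin.last n), p (Fin.last (n + 1))) ∈ D}
        = {p : Fin (n + 2) → Ω |
            ((Fin.init p : Fin (n + 1) → Ω), p (Fin.last (n + 1))) ∈ S} := rfl
    rw [heq, fdd_succ_apply μ0 ℓ n S hSm]
    have hind : ∀ q : Fin (n + 1) → Ω,
        ℓ (q (Fin.last n)) (Prod.mk q ⁻¹' S)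
          = (NH n).indicator (fun q => ℓ (q (Fin.last n))
              (Prod.mk (q (Fin.last n)) ⁻¹' D)) q := by
      intro q
      by_cases hq : q ∈ NH n
      · rw [Set.indicator_of_mem hq]
        congr 1
        ext y
        simp [hS, hq]
      · rw [Set.indicator_of_notMem hq]
        have hemp : Prod.mk q ⁻¹' S = ∅ := by
          ext y; simp [hS, hq]
        rw [hemp]
        simp
    simp_rw [hind]
    rw [lintegral_indicator (hNHm n), hα]
    simp only
    rw [lintegral_map hmeasD (measurable_pi_apply _)]
  have hαle : ∀ n, α n ≤ ν := by
    intro n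
    induction n with
    | zero => rw [hα0, hμ0]; exact Measure.restrict_le_self
    | succ n ih =>
      refine Measure.le_iff.2 fun D hD => ?_
      rw [hrec n D hD]
      calc ∫⁻ x, ℓ x (D ∩ Bᶜ) ∂α n ≤ ∫⁻ x, ℓ x (D ∩ Bᶜ) ∂ν := lintegral_mono' ih le_rfl
      _ = Φ (univ ×ˢ (D ∩ Bᶜ)) := by
          rw [← hF5 _ (MeasurableSet.univ.prod (hD.inter hB.compl))]
          refine lintegral_congr fun x => ?_
          congr 1
          ext y
          simp
      _ ≤ ν D := hΦsnd_le D hD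
  have hstepΦ : ∀ (n : ℕ) (D : Set (Ω × Ω)), MeasurableSet D →
      fdd μ0 ℓ (n + 1) {p | Fin.init p ∈ NH n ∧
          (Fin.init p (Fin.last n), p (Fin.last (n + 1))) ∈ D} ≤ Φ D := by
    intro n D hD
    rw [hstep n D hD, ← hF5 D hD]
    exact lintegral_mono' (hαle n) le_rfl
  -- transfer to the path measure P
  have hrmeas : ∀ n : ℕ, Measurable (fun (ω : ℕ → Ω) (i : Fin (n + 1)) => ω (i : ℕ)) :=
    fun n => measurable_pi_lambda _ fun i => measurable_pi_apply _
  set Ev : ℕ → Set (ℕ → Ω) := fun n => {ω | ∀ m, 1 ≤ m → m ≤ n → ω m ∉ B} with hEv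
  have hEvm : ∀ n, MeasurableSet (Ev n) := by
    intro n
    have heqE : Ev n = ⋂ m : ℕ, {ω : ℕ → Ω | 1 ≤ m → m ≤ n → ω m ∉ B} := by
      ext ω; simp [hEv]
    rw [heqE]
    refine MeasurableSet.iInter fun m => ?_
    by_cases h1 : 1 ≤ m ∧ m ≤ n
    · have heq2 : {ω : ℕ → Ω | 1 ≤ m → m ≤ n → ω m ∉ B}
          = (fun ω : ℕ → Ω => ω m) ⁻¹' Bᶜ := by
        ext ω; simp [h1.1, h1.2]
      rw [heq2]
      exact measurable_pi_apply m hB.compl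
    · have heq2 : {ω : ℕ → Ω | 1 ≤ m → m ≤ n → ω m ∉ B} = univ := by
        ext ω
        simp only [Set.mem_setOf_eq, Set.mem_univ, iff_true]
        intro hm1 hmn
        exact absurd ⟨hm1, hmn⟩ h1
      rw [heq2]
      exact MeasurableSet.univ
  have hPev : ∀ n : ℕ, P (Ev n) = α n univ := by
    intro n
    have hα' : α n univ = fdd μ0 ℓ n (NH n) := by
      rw [hα_apply n univ MeasurableSet.univ]
      congr 1
      ext q; simp
    rw [hα', ← hPmap n, Measure.map_apply (hrmeas n) (hNHm n)]
    congr 1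
    ext ω
    simp only [Set.mem_preimage, Set.mem_setOf_eq, hNH, hEv]
    constructor
    · intro hω i hi
      exact hω i hi (by have := i.isLt; omega)
    · intro hω m h1 h2
      exact hω (⟨m, by omega⟩ : Fin (n + 1)) (by simpa using h1)
  have hPstep : ∀ (n : ℕ) (D : Set (Ω × Ω)), MeasurableSet D →
      P {ω : ℕ → Ω | (∀ m, 1 ≤ m → m ≤ n → ω m ∉ B) ∧ (ω n, ω (n + 1)) ∈ D} ≤ Φ D := by
    intro n D hD
    have hinitm : Measurable (fun p : Fin (n + 2) → Ω => (Fin.init p : Fin (n + 1) → Ω)) :=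
      measurable_pi_lambda _ (fun i => measurable_pi_apply i.castSucc)
    have hTm : MeasurableSet {p : Fin (n + 2) → Ω | Fin.init p ∈ NH n ∧
        (Fin.init p (Fin.last n), p (Fin.last (n + 1))) ∈ D} := by
      refine MeasurableSet.inter ?_ ?_
      · exact hinitm (hNHm n)
      · exact ((measurable_pi_apply ((Fin.last n).castSucc)).prodMk
          (measurable_pi_apply (Fin.last (n + 1)))) hD
    have hev : {ω : ℕ → Ω | (∀ m, 1 ≤ m → m ≤ n → ω m ∉ B) ∧ (ω n, ω (n + 1)) ∈ D}
        = (fun (ω : ℕ → Ω) (i : Fin (n + 2)) => ω (i : ℕ)) ⁻¹' {p : Fin (n + 2) → Ω |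
            Fin.init p ∈ NH n ∧ (Fin.init p (Fin.last n), p (Fin.last (n + 1))) ∈ D} := by
      ext ω
      simp only [Set.mem_preimage, Set.mem_setOf_eq, hNH, Fin.init]
      constructor
      · rintro ⟨hcond, hD'⟩
        constructor
        · intro i hi
          exact hcond i (by simpa using hi) (by have := i.isLt; omega)
        · simpa using hD'
      · rintro ⟨hcond, hD'⟩
        constructor
        · intro m h1 h2
          have := hcond (⟨m, by omega⟩ : Fin (n + 1)) (by simpa using h1)
          simpa using this
        · simpa using hD'
    rw [hev, ← Measure.map_apply (hrmeas (n + 1)) hTm, hPmap (n + 1)]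
    exact hstepΦ n D hD
  -- the mean-drift function φ
  set φ : Ω → ℝ≥0∞ := fun x => ∫⁻ y, ENNReal.ofReal (hAB x - hAB y) ∂ℓ x with hφ
  have hφmeas : Measurable φ := by
    refine Measurable.lintegral_kernel_prod_right
      (κ := ℓ) (f := fun x y => ENNReal.ofReal (hAB x - hAB y)) ?_
    exact ((hmeas_h.comp measurable_fst).sub (hmeas_h.comp measurable_snd)).ennreal_ofReal
  have hsupp : ∀ᵐ x ∂ν, ℓ x {y | hAB x ≤ hAB y} = 0 := by
    have h0 : ∫⁻ x, ℓ x (Prod.mk x ⁻¹' {p : Ω × Ω | hAB p.1 ≤ hAB p.2}) ∂ν = 0 := by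
      rw [hF5 _ hDnegm, hΦDneg]
    have hm : Measurable fun x => ℓ x (Prod.mk x ⁻¹' {p : Ω × Ω | hAB p.1 ≤ hAB p.2}) :=
      Kernel.measurable_kernel_prodMk_left hDnegm
    filter_upwards [(lintegral_eq_zero_iff hm).1 h0] with x hx
    simpa using hx
  have hφbal : ∀ᵐ x ∂ν,
      ∫⁻ y, ENNReal.ofReal (hAB y) ∂ℓ x + φ x = ENNReal.ofReal (hAB x) := by
    filter_upwards [hsupp] with x hx
    have hae : ∀ᵐ y ∂ℓ x, hAB y < hAB x := by
      have hce : {y | ¬ hAB y < hAB x} = {y | hAB x ≤ hAB y} := by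
        ext y; simp [not_lt]
      rw [ae_iff, hce]
      exact hx
    rw [hφ]
    simp only
    calc ∫⁻ y, ENNReal.ofReal (hAB y) ∂ℓ x + ∫⁻ y, ENNReal.ofReal (hAB x - hAB y) ∂ℓ x
        = ∫⁻ y, (ENNReal.ofReal (hAB y) + ENNReal.ofReal (hAB x - hAB y)) ∂ℓ x :=
          (lintegral_add_left (hmeas_h.ennreal_ofReal) _).symm
    _ = ∫⁻ _, ENNReal.ofReal (hAB x) ∂ℓ x := by
          refine lintegral_congr_ae ?_
          filter_upwards [hae] with y hy
          rw [← ENNReal.ofReal_add (h01 y).1 (by linarith), add_sub_cancel]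
    _ = ENNReal.ofReal (hAB x) := by rw [lintegral_const, measure_univ, mul_one]
  have hφpos : ∀ᵐ x ∂ν, 0 < φ x := by
    filter_upwards [hsupp] with x hx
    rw [hφ]
    simp only
    rw [lintegral_pos_iff_support (f := fun y => ENNReal.ofReal (hAB x - hAB y)) ((measurable_const.sub hmeas_h).ennreal_ofReal)]
    have hsupp_eq : Function.support (fun y => ENNReal.ofReal (hAB x - hAB y))
        = {y | hAB y < hAB x} := by
      ext y
      simp [Function.mem_support, ENNReal.ofReal_eq_zero, not_le, sub_pos]
    rw [hsupp_eq]
    have hms : MeasurableSet {y | hAB x ≤ hAB y} := measurableSet_le measurable_const hmeas_h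
    have hcompl := measure_compl (μ := ℓ x) hms (measure_ne_top _ _)
    have hce : ({y | hAB x ≤ hAB y} : Set Ω)ᶜ = {y | hAB y < hAB x} := by
      ext y; simp [not_le]
    rw [hce] at hcompl
    rw [hcompl, hx, measure_univ, tsub_zero]
    exact zero_lt_one
  -- energy decay
  set eng : ℕ → ℝ≥0∞ := fun n => ∫⁻ x, ENNReal.ofReal (hAB x) ∂α n with heng
  set Iseq : ℕ → ℝ≥0∞ := fun n => ∫⁻ x, φ x ∂α n with hIseq
  have hmb : Measurable fun x => (ℓ x).restrict Bᶜ := by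
    refine Measure.measurable_of_measurable_coe _ fun T hT => ?_
    simp_rw [Measure.restrict_apply hT]
    exact Kernel.measurable_coe ℓ (hT.inter hB.compl)
  have hαbind : ∀ n, α (n + 1) = (α n).bind (fun x => (ℓ x).restrict Bᶜ) := by
    intro n
    ext D hD
    rw [hrec n D hD, Measure.bind_apply hD hmb.aemeasurable]
    refine lintegral_congr fun x => ?_
    rw [Measure.restrict_apply hD]
  have hmray : Measurable fun x => ∫⁻ y, ENNReal.ofReal (hAB y) ∂ℓ x :=
    Measurable.lintegral_kernel_prod_right (κ := ℓ) (f := fun _ y => ENNReal.ofReal (hAB y))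
      ((hmeas_h.comp measurable_snd).ennreal_ofReal)
  have hrece : ∀ n, eng (n + 1) + Iseq n ≤ eng n := by
    intro n
    have h1 : eng (n + 1) ≤ ∫⁻ x, ∫⁻ y, ENNReal.ofReal (hAB y) ∂ℓ x ∂α n := by
      rw [heng]
      simp only
      rw [hαbind n, Measure.lintegral_bind hmb.aemeasurable hmeas_h.ennreal_ofReal.aemeasurable]
      exact lintegral_mono fun x => setLIntegral_le_lintegral _ _
    calc eng (n + 1) + Iseq n
        ≤ (∫⁻ x, ∫⁻ y, ENNReal.ofReal (hAB y) ∂ℓ x ∂α n) + Iseq n := add_le_add_left h1 _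
    _ = ∫⁻ x, (∫⁻ y, ENNReal.ofReal (hAB y) ∂ℓ x + φ x) ∂α n := by
        rw [hIseq]
        simp only
        rw [lintegral_add_left hmray]
    _ = ∫⁻ x, ENNReal.ofReal (hAB x) ∂α n := by
        refine lintegral_congr_ae ?_
        exact hφbal.filter_mono (Measure.absolutelyContinuous_of_le (hαle n)).ae_le
    _ = eng n := rfl
  have hsum : ∀ N, eng N + ∑ n ∈ Finset.range N, Iseq n ≤ eng 0 := by
    intro N
    induction N with
    | zero => simp
    | succ N ih =>
      rw [Finset.sum_range_succ]
      calc eng (N + 1) + (∑ n ∈ Finset.range N, Iseq n + Iseq N)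
          = (eng (N + 1) + Iseq N) + ∑ n ∈ Finset.range N, Iseq n := by ring
      _ ≤ eng N + ∑ n ∈ Finset.range N, Iseq n := add_le_add_left (hrece N) _
      _ ≤ eng 0 := ih
  have he0fin : eng 0 ≠ ⊤ := by
    have hle : eng 0 ≤ α 0 univ := by
      rw [heng]
      simp only
      calc ∫⁻ x, ENNReal.ofReal (hAB x) ∂α 0 ≤ ∫⁻ _, 1 ∂α 0 :=
        lintegral_mono fun x => ENNReal.ofReal_le_one.2 (h01 x).2
      _ = α 0 univ := by rw [lintegral_one]
    refine ne_of_lt (lt_of_le_of_lt hle (lt_of_le_of_lt (Measure.le_iff'.1 (hαle 0) univ) ?_))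
    exact lt_top_iff_ne_top.2 hνuniv
  have hIto0 : Filter.Tendsto Iseq Filter.atTop (nhds 0) := by
    refine ENNReal.tendsto_atTop_zero_of_tsum_ne_top ?_
    refine ne_of_lt (lt_of_le_of_lt (Summable.tsum_le_of_sum_range_le ENNReal.summable fun N => ?_)
      (lt_top_iff_ne_top.2 he0fin))
    calc ∑ n ∈ Finset.range N, Iseq n ≤ eng N + ∑ n ∈ Finset.range N, Iseq n := le_add_self
    _ ≤ eng 0 := hsum N
  have hEvanti : Antitone Ev := by
    intro a b hab ω hω m h1 h2
    exact hω m h1 (le_trans h2 hab)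
  have hInter : (⋂ n, Ev n) = {ω | ¬ HitsB B ω} := by
    ext ω
    simp only [Set.mem_iInter, hEv, Set.mem_setOf_eq, HitsB, not_exists]
    constructor
    · intro hω n hn
      exact hω n n hn.1 le_rfl hn.2
    · intro hω n m h1 h2
      exact fun hBm => hω m ⟨h1, hBm⟩
  have htend : Filter.Tendsto (fun n => α n univ) Filter.atTop
      (nhds (P {ω | ¬ HitsB B ω})) := by
    have ht := MeasureTheory.tendsto_measure_iInter_atTop (μ := P)
      (fun n => (hEvm n).nullMeasurableSet) hEvanti ⟨0, measure_ne_top P _⟩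
    rw [hInter] at ht
    exact ht.congr fun n => hPev n
  have hν_small : Filter.Tendsto (fun j : ℕ => ν {x | φ x < ((j : ℝ≥0∞) + 1)⁻¹})
      Filter.atTop (nhds 0) := by
    have hSm : ∀ j : ℕ, MeasurableSet {x | φ x < ((j : ℝ≥0∞) + 1)⁻¹} :=
      fun j => hφmeas measurableSet_Iio
    have hanti : Antitone fun j : ℕ => {x | φ x < ((j : ℝ≥0∞) + 1)⁻¹} := by
      intro a b hab x hx
      refine lt_of_lt_of_le hx (ENNReal.inv_le_inv.2 ?_)
      exact add_le_add_left (by exact_mod_cast hab) 1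
    have hint : (⋂ j : ℕ, {x | φ x < ((j : ℝ≥0∞) + 1)⁻¹}) = {x | φ x = 0} := by
      ext x
      simp only [Set.mem_iInter, Set.mem_setOf_eq]
      constructor
      · intro hx
        by_contra h0
        obtain ⟨m, hm⟩ := ENNReal.exists_inv_nat_lt h0
        have hmm : ((m : ℝ≥0∞) + 1)⁻¹ ≤ ((m : ℝ≥0∞))⁻¹ :=
          ENNReal.inv_le_inv.2 (by simp)
        exact absurd (lt_of_lt_of_le (hx m) (le_trans hmm (le_of_lt hm))) (lt_irrefl _)
      · intro hx j
        rw [hx]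
        exact ENNReal.inv_pos.2 (by simp)
    have ht := MeasureTheory.tendsto_measure_iInter_atTop (μ := ν)
      (fun j => (hSm j).nullMeasurableSet) hanti ⟨0, by
        refine ne_of_lt (lt_of_le_of_lt (measure_mono (Set.subset_univ _)) ?_)
        exact lt_top_iff_ne_top.2 hνuniv⟩
    rw [hint] at ht
    have hzero : ν {x | φ x = 0} = 0 := by
      refine measure_mono_null (fun x hx => ?_) (ae_iff.1 hφpos)
      simp only [Set.mem_setOf_eq] at hx ⊢
      simp [hx]
    rw [hzero] at ht
    exact ht
  have hPmiss : P {ω | ¬ HitsB B ω} = 0 := by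
    have hbound : ∀ j n : ℕ,
        α n univ ≤ ν {x | φ x < ((j : ℝ≥0∞) + 1)⁻¹} + ((j : ℝ≥0∞) + 1) * Iseq n := by
      intro j n
      have hδ0 : ((j : ℝ≥0∞) + 1)⁻¹ ≠ 0 := ENNReal.inv_ne_zero.2 (by simp)
      have hsplitm : α n univ ≤ α n {x | φ x < ((j : ℝ≥0∞) + 1)⁻¹}
          + α n {x | ((j : ℝ≥0∞) + 1)⁻¹ ≤ φ x} := by
        refine le_trans (measure_mono fun x _ => ?_) (measure_union_le _ _)
        by_cases hx : φ x < ((j : ℝ≥0∞) + 1)⁻¹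
        · exact Or.inl hx
        · exact Or.inr (not_lt.1 hx)
      have h1 : α n {x | φ x < ((j : ℝ≥0∞) + 1)⁻¹} ≤ ν {x | φ x < ((j : ℝ≥0∞) + 1)⁻¹} :=
        Measure.le_iff'.1 (hαle n) _
      have h2 : α n {x | ((j : ℝ≥0∞) + 1)⁻¹ ≤ φ x} ≤ ((j : ℝ≥0∞) + 1) * Iseq n := by
        have hmg := mul_meas_ge_le_lintegral₀ (hφmeas.aemeasurable (μ := α n)) (((j : ℝ≥0∞) + 1)⁻¹)
        calc α n {x | ((j : ℝ≥0∞) + 1)⁻¹ ≤ φ x}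
            = ((j : ℝ≥0∞) + 1) * (((j : ℝ≥0∞) + 1)⁻¹ * α n {x | ((j : ℝ≥0∞) + 1)⁻¹ ≤ φ x}) := by
              rw [← mul_assoc, ENNReal.mul_inv_cancel (by simp) (by simp), one_mul]
        _ ≤ ((j : ℝ≥0∞) + 1) * Iseq n := mul_le_mul_right hmg _
      exact le_trans hsplitm (add_le_add h1 h2)
    refine le_antisymm ?_ zero_le
    refine ge_of_tendsto' hν_small fun j => ?_
    have h2 : Filter.Tendsto (fun n => ((j : ℝ≥0∞) + 1) * Iseq n) Filter.atTop (nhds 0) := by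
      have := ENNReal.Tendsto.const_mul hIto0 (Or.inr (by simp : ((j : ℝ≥0∞) + 1) ≠ ⊤))
      simpa using this
    have htendj : Filter.Tendsto
        (fun n => ν {x | φ x < ((j : ℝ≥0∞) + 1)⁻¹} + ((j : ℝ≥0∞) + 1) * Iseq n)
        Filter.atTop (nhds (ν {x | φ x < ((j : ℝ≥0∞) + 1)⁻¹})) := by
      have hconst : Filter.Tendsto (fun _ : ℕ => ν {x | φ x < ((j : ℝ≥0∞) + 1)⁻¹})
          Filter.atTop (nhds (ν {x | φ x < ((j : ℝ≥0∞) + 1)⁻¹})) := tendsto_const_nhds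
      simpa using hconst.add h2
    exact le_of_tendsto_of_tendsto' htend htendj (hbound j)
  have hHits : ∀ᵐ ω ∂P, HitsB B ω := by
    rw [ae_iff]
    exact hPmiss
  -- the bad edge set has zero flow
  have h1m : MeasurableSet {p : Ω × Ω | Φ.rnDeriv K p = f p} := by
    have heqi : {p : Ω × Ω | Φ.rnDeriv K p = f p}
        = {p | Φ.rnDeriv K p ≤ f p} ∩ {p | f p ≤ Φ.rnDeriv K p} := by
      ext p
      simp [le_antisymm_iff, Set.mem_inter_iff]
    rw [heqi]
    exact (measurableSet_le (Measure.measurable_rnDeriv Φ K) hfmeas).inter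
      (measurableSet_le hfmeas (Measure.measurable_rnDeriv Φ K))
  have hNm : MeasurableSet {p : Ω × Ω | Φ.rnDeriv K p ≠ f p} := h1m.compl
  have hrnae : (K.withDensity f).rnDeriv K =ᶠ[MeasureTheory.ae K] f :=
    Measure.rnDeriv_withDensity K hfmeas
  have hKN : K {p | Φ.rnDeriv K p ≠ f p} = 0 := by
    have h' : ∀ᵐ p ∂K, Φ.rnDeriv K p = f p := by
      rw [hΦdef]
      exact hrnae
    exact ae_iff.1 h'
  have hΦac : Φ ≪ K := by
    rw [hΦdef]
    exact withDensity_absolutelyContinuous K f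
  have hΦN : Φ {p | Φ.rnDeriv K p ≠ f p} = 0 := hΦac hKN
  have hgood : ∀ᵐ ω ∂P, ∀ n : ℕ, (∀ m, 1 ≤ m → m ≤ n → ω m ∉ B) →
      (Φ.rnDeriv K (ω n, ω (n + 1)) = f (ω n, ω (n + 1))
        ∧ hAB (ω (n + 1)) < hAB (ω n)) := by
    rw [ae_all_iff]
    intro n
    have hbadm : MeasurableSet
        ({p : Ω × Ω | Φ.rnDeriv K p ≠ f p} ∪ {p | hAB p.1 ≤ hAB p.2}) := hNm.union hDnegm
    have hΦbad : Φ ({p : Ω × Ω | Φ.rnDeriv K p ≠ f p} ∪ {p | hAB p.1 ≤ hAB p.2}) = 0 := by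
      refine le_antisymm (le_trans (measure_union_le _ _) ?_) zero_le
      rw [hΦN, hΦDneg, add_zero]
    have hP0 : P {ω : ℕ → Ω | (∀ m, 1 ≤ m → m ≤ n → ω m ∉ B) ∧ (ω n, ω (n + 1)) ∈
        ({p : Ω × Ω | Φ.rnDeriv K p ≠ f p} ∪ {p | hAB p.1 ≤ hAB p.2})} = 0 :=
      le_antisymm (le_trans (hPstep n _ hbadm) (le_of_eq hΦbad)) zero_le
    rw [ae_iff]
    refine measure_mono_null ?_ hP0
    intro ω hω
    rw [Set.mem_setOf_eq] at hω
    push_neg at hω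
    obtain ⟨hcond, hbad⟩ := hω
    refine ⟨hcond, ?_⟩
    by_cases heq : Φ.rnDeriv K (ω n, ω (n + 1)) = f (ω n, ω (n + 1))
    · exact Or.inr (hbad heq)
    · exact Or.inl heq
  have hω0 : ∀ᵐ ω ∂P, ω 0 ∈ A := by
    rw [ae_iff]
    have hev0 : {ω : ℕ → Ω | ¬ ω 0 ∈ A} = (fun (ω : ℕ → Ω) (i : Fin 1) => ω (i : ℕ)) ⁻¹'
        ((fun q : Fin 1 → Ω => q (Fin.last 0)) ⁻¹' Aᶜ) := by
      ext ω
      simp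
    rw [hev0, ← Measure.map_apply (hrmeas 0) ((measurable_pi_apply _) hA.compl), hPmap 0]
    show fdd μ0 ℓ 0 _ = 0
    rw [show fdd μ0 ℓ 0 = μ0.map (fun x => fun _ => x) from rfl]
    have hconst0 : Measurable (fun (x : Ω) (_ : Fin 1) => x) :=
      measurable_pi_lambda _ fun _ => measurable_id
    rw [Measure.map_apply hconst0 ((measurable_pi_apply _) hA.compl)]
    have hpre : (fun (x : Ω) (_ : Fin 1) => x) ⁻¹'
        ((fun q : Fin 1 → Ω => q (Fin.last 0)) ⁻¹' Aᶜ) = Aᶜ := rfl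
    rw [hpre, hμ0, Measure.restrict_apply hA.compl]
    simp
  have hpart2 : ∀ᵐ ω ∂P, ∀ i j : ℕ, i < j →
      (∀ m : ℕ, 1 ≤ m → m < j → ω m ∉ B) → ω i ≠ ω j := by
    filter_upwards [hgood] with ω hω
    intro i j hij hnb
    have hdec : ∀ n, n < j → hAB (ω (n + 1)) < hAB (ω n) := by
      intro n hn
      exact (hω n (fun m h1 h2 => hnb m h1 (lt_of_le_of_lt h2 hn))).2
    have haux : ∀ jj, i < jj → jj ≤ j → hAB (ω jj) < hAB (ω i) := by
      intro jj
      induction jj with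
      | zero => intro h1 _; exact absurd h1 (Nat.not_lt_zero i)
      | succ m ih =>
        intro h1 h2
        rcases Nat.lt_or_ge i m with him | him
        · exact lt_trans (hdec m (by omega)) (ih him (by omega))
        · have hi : i = m := by omega
          subst hi
          exact hdec i (by omega)
    have hlt := haux j hij le_rfl
    intro heq
    rw [heq] at hlt
    exact lt_irrefl _ hlt
  have hconstae : ∀ᵐ ω ∂P,
      (if HitsB B ω then (stoppedSum B (Φ.rnDeriv K) ω)⁻¹ else 0) = c := by
    filter_upwards [hHits, hgood, hω0] with ω hH hg h0
    rw [if_pos hH]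
    have hex : ∃ n, 1 ≤ n ∧ ω n ∈ B := hH
    set t := Nat.find hex with ht
    have htspec := Nat.find_spec hex
    have htmin : ∀ m, m < t → ¬ (1 ≤ m ∧ ω m ∈ B) := fun m hm => Nat.find_min hex hm
    have hcond_iff : ∀ n, (∀ m, 1 ≤ m → m ≤ n → ω m ∉ B) ↔ n < t := by
      intro n
      constructor
      · intro hc
        by_contra hge
        push_neg at hge
        exact hc t htspec.1 hge htspec.2
      · intro hn m h1 h2 hBm
        exact htmin m (by omega) ⟨h1, hBm⟩
    have hsum_eq : stoppedSum B (Φ.rnDeriv K) ω = c⁻¹ := by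
      have h1 : stoppedSum B (Φ.rnDeriv K) ω
          = ∑' n : ℕ, (if n < t then Φ.rnDeriv K (ω n, ω (n + 1)) else 0) := by
        refine tsum_congr fun n => ?_
        by_cases hn : n < t
        · rw [if_pos hn]
          exact if_pos ((hcond_iff n).2 hn)
        · rw [if_neg hn]
          exact if_neg (fun hc => hn ((hcond_iff n).1 hc))
      rw [h1, tsum_eq_sum (s := Finset.range t) (fun n hn => if_neg (by simpa using hn))]
      have hstep' : ∀ n ∈ Finset.range t,
          (if n < t then Φ.rnDeriv K (ω n, ω (n + 1)) else 0)
            = c⁻¹ * ENNReal.ofReal (hAB (ω n) - hAB (ω (n + 1))) := by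
        intro n hn
        rw [Finset.mem_range] at hn
        rw [if_pos hn, (hg n ((hcond_iff n).2 hn)).1]
      rw [Finset.sum_congr rfl hstep', ← Finset.mul_sum]
      have hnonneg : ∀ n ∈ Finset.range t, 0 ≤ hAB (ω n) - hAB (ω (n + 1)) := by
        intro n hn
        rw [Finset.mem_range] at hn
        have := (hg n ((hcond_iff n).2 hn)).2
        linarith
      rw [← ENNReal.ofReal_sum_of_nonneg hnonneg,
        Finset.sum_range_sub' (fun n => hAB (ω n)) t,
        hA1 _ h0, hB0 _ htspec.2]
      norm_num
    rw [hsum_eq, inv_inv]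
  refine ⟨hHits, hpart2, ?_⟩
  show (∫⁻ ω, (if HitsB B ω then (stoppedSum B (Φ.rnDeriv K) ω)⁻¹ else 0) ∂P) = c
  rw [lintegral_congr_ae hconstae, lintegral_const, measure_univ, mul_one]
end

section
/- Existence and essential uniqueness of the Dirichlet minimizer: if V_AB is nonempty, then there exists h_AB ∈ V_AB with E(h_AB) = Cap(A,B) = inf_{h∈V_AB} E(h); moreover any two minimizers f,g ∈ V_AB satisfy f(x)−f(y) = g(x)−g(y) for K-almost every (x,y) ∈ Ω×Ω. -/
open MeasureTheory ProbabilityTheory ENNReal Set Filter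
open scoped Classical

section DirichletAux

open MeasureTheory Filter Set ENNReal

variable {Ω : Type*} [MeasurableSpace Ω]

/-- The un-halved Dirichlet integral. -/
noncomputable def dInt (K : Measure (Ω × Ω)) (h : Ω → ℝ) : ℝ≥0∞ :=
  ∫⁻ p, ENNReal.ofReal ((h p.2 - h p.1) ^ 2) ∂K

lemma dirichletForm_eq_dInt (K : Measure (Ω × Ω)) (h : Ω → ℝ) :
    dirichletForm K h = 2⁻¹ * dInt K h := rfl

lemma dInt_eq (K : Measure (Ω × Ω)) (h : Ω → ℝ) :
    dInt K h = 2 * dirichletForm K h := by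
  rw [dirichletForm_eq_dInt, ← mul_assoc, ENNReal.mul_inv_cancel two_ne_zero ENNReal.ofNat_ne_top,
    one_mul]

lemma meas_incsq {h : Ω → ℝ} (hm : Measurable h) :
    Measurable fun p : Ω × Ω => ENNReal.ofReal ((h p.2 - h p.1) ^ 2) :=
  ENNReal.measurable_ofReal.comp
    (((hm.comp measurable_snd).sub (hm.comp measurable_fst)).pow_const 2)

lemma ofReal_two_mul' (a : ℝ) : ENNReal.ofReal (2*a) = 2 * ENNReal.ofReal a := by
  rw [ENNReal.ofReal_mul (by norm_num : (0:ℝ) ≤ 2)]; norm_num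

lemma dInt_para (K : Measure (Ω × Ω)) {f g : Ω → ℝ} (hf : Measurable f) (hg : Measurable g) :
    dInt K f + dInt K g
      = 2 * dInt K (fun x => (f x + g x) / 2) + 2 * dInt K (fun x => (f x - g x) / 2) := by
  have key : ∀ p : Ω × Ω,
      ENNReal.ofReal ((f p.2 - f p.1) ^ 2) + ENNReal.ofReal ((g p.2 - g p.1) ^ 2)
        = 2 * ENNReal.ofReal (((f p.2 + g p.2)/2 - (f p.1 + g p.1)/2) ^ 2)
          + 2 * ENNReal.ofReal (((f p.2 - g p.2)/2 - (f p.1 - g p.1)/2) ^ 2) := by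
    intro p
    rw [← ofReal_two_mul', ← ofReal_two_mul', ← ENNReal.ofReal_add (by positivity) (by positivity),
      ← ENNReal.ofReal_add (by positivity) (by positivity)]
    congr 1
    ring
  have hmm : Measurable (fun x => (f x + g x) / 2) := (hf.add hg).div_const 2
  have hmd : Measurable (fun x => (f x - g x) / 2) := (hf.sub hg).div_const 2
  calc dInt K f + dInt K g
      = ∫⁻ p, (ENNReal.ofReal ((f p.2 - f p.1) ^ 2) + ENNReal.ofReal ((g p.2 - g p.1) ^ 2)) ∂K :=
        (lintegral_add_left (meas_incsq hf) _).symm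
    _ = ∫⁻ p, (2 * ENNReal.ofReal ((((fun x => (f x + g x)/2) p.2) - ((fun x => (f x + g x)/2) p.1)) ^ 2)
          + 2 * ENNReal.ofReal ((((fun x => (f x - g x)/2) p.2) - ((fun x => (f x - g x)/2) p.1)) ^ 2)) ∂K :=
        lintegral_congr fun p => key p
    _ = 2 * dInt K (fun x => (f x + g x) / 2) + 2 * dInt K (fun x => (f x - g x) / 2) := by
        rw [lintegral_add_left ((meas_incsq hmm).const_mul 2),
          lintegral_const_mul _ (meas_incsq hmm), lintegral_const_mul _ (meas_incsq hmd)]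
        rfl

lemma dirichletForm_para (K : Measure (Ω × Ω)) {f g : Ω → ℝ}
    (hf : Measurable f) (hg : Measurable g) :
    dirichletForm K f + dirichletForm K g
      = 2 * dirichletForm K (fun x => (f x + g x) / 2)
        + 2 * dirichletForm K (fun x => (f x - g x) / 2) := by
  simp only [dirichletForm_eq_dInt, ← mul_add]
  rw [dInt_para K hf hg]
  ring

lemma VAB_mid_mem {K : Measure (Ω × Ω)} {A B : Set Ω} {f g : Ω → ℝ}
    (hf : f ∈ VAB A B K) (hg : g ∈ VAB A B K) :
    (fun x => (f x + g x) / 2) ∈ VAB A B K := by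
  obtain ⟨fm, fA, fB, fb, fE⟩ := hf
  obtain ⟨gm, gA, gB, gb, gE⟩ := hg
  refine ⟨(fm.add gm).div_const 2, ?_, ?_, ?_, ?_⟩
  · intro x hx
    show (f x + g x) / 2 = 1
    rw [fA x hx, gA x hx]; norm_num
  · intro x hx
    show (f x + g x) / 2 = 0
    rw [fB x hx, gB x hx]; norm_num
  · intro x
    obtain ⟨h1, h2⟩ := fb x; obtain ⟨h3, h4⟩ := gb x
    constructor <;> [linarith; linarith]
  · have hpar := dirichletForm_para K fm gm
    have h1 : 2 * dirichletForm K (fun x => (f x + g x)/2)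
        ≤ dirichletForm K f + dirichletForm K g := by
      rw [hpar]; exact self_le_add_right _ _
    have h2 : dirichletForm K (fun x => (f x + g x)/2)
        ≤ 2 * dirichletForm K (fun x => (f x + g x)/2) :=
      le_mul_of_one_le_left zero_le one_le_two
    exact lt_of_le_of_lt (h2.trans h1) (ENNReal.add_lt_top.mpr ⟨fE, gE⟩)

lemma limsup_shift (u v : ℕ → ℝ) (hu0 : ∀ n, 0 ≤ u n) (hu1 : ∀ n, u n ≤ 1)
    {L : ℝ} (hL : Tendsto (fun n => v n - u n) atTop (nhds L)) :
    limsup v atTop = limsup u atTop + L := by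
  have hb1 : IsBoundedUnder (· ≤ ·) atTop u := isBoundedUnder_of ⟨1, fun n => hu1 n⟩
  have hb2 : IsBoundedUnder (· ≥ ·) atTop u := isBoundedUnder_of ⟨0, fun n => hu0 n⟩
  have hco : IsCoboundedUnder (· ≤ ·) atTop u := hb2.isCoboundedUnder_le
  have hwb1 : IsBoundedUnder (· ≤ ·) atTop (fun n => v n - u n) := hL.isBoundedUnder_le
  have hwb2 : IsBoundedUnder (· ≥ ·) atTop (fun n => v n - u n) := hL.isBoundedUnder_ge
  have hwco : IsCoboundedUnder (· ≤ ·) atTop (fun n => v n - u n) := hwb2.isCoboundedUnder_le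
  have hv : v = u + fun n => v n - u n := by funext n; simp
  have h1 : limsup v atTop ≤ limsup u atTop + L := by
    rw [hv, ← hL.limsup_eq]
    exact limsup_add_le hb2 hb1 hwco hwb1
  have h2 : limsup u atTop + L ≤ limsup v atTop := by
    rw [hv, ← hL.liminf_eq]
    exact le_limsup_add hb1 hco hwb1 hwb2
  exact le_antisymm h1 h2

lemma abs_le_weight (n : ℕ) (x : ℝ) : |x| ≤ 2^n * x^2 + 2⁻¹^n := by
  have h2pos : (0:ℝ) < 2^n := by positivity
  rcases le_or_gt (|x|) ((2:ℝ)⁻¹^n) with hle | hlt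
  · have h0 : (0:ℝ) ≤ 2^n * x^2 := by positivity
    linarith
  · have h3 : (1:ℝ) < 2^n * |x| := by
      rw [inv_pow] at hlt
      have := mul_lt_mul_of_pos_left hlt h2pos
      rwa [mul_inv_cancel₀ h2pos.ne'] at this
    have h4 : |x| ≤ 2^n * x^2 := by
      nlinarith [abs_nonneg x, sq_abs x]
    have h5 : (0:ℝ) ≤ (2⁻¹:ℝ)^n := by positivity
    linarith

end DirichletAux
set_option maxHeartbeats 2000000 in
/-- **Existence and essential uniqueness of the Dirichlet minimizer.** -/
theorem dirichlet_minimizer_exists_unique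
    {Ω : Type*} [MeasurableSpace Ω] [TopologicalSpace Ω] [PolishSpace Ω] [BorelSpace Ω]
    (K : Measure (Ω × Ω)) [SigmaFinite K]
    (hKsym : ∀ C D : Set Ω, MeasurableSet C → MeasurableSet D → K (C ×ˢ D) = K (D ×ˢ C))
    (μ : Measure Ω) [SigmaFinite μ] (k : Kernel Ω Ω)
    (hKrep : ∀ C D : Set Ω, MeasurableSet C → MeasurableSet D →
      K (C ×ˢ D) = ∫⁻ x in C, k x D ∂μ)
    (A B : Set Ω) (hA : MeasurableSet A) (hB : MeasurableSet B) (hd : Disjoint A B)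
    (hμA : 0 < μ A) (hμB : 0 < μ B)
    (hne : (VAB A B K).Nonempty) :
    (∃ h ∈ VAB A B K, dirichletForm K h = Cap A B K) ∧
    (∀ f ∈ VAB A B K, ∀ g ∈ VAB A B K,
      dirichletForm K f = Cap A B K → dirichletForm K g = Cap A B K →
      ∀ᵐ p ∂K, f p.1 - f p.2 = g p.1 - g p.2) := by
  classical
  obtain ⟨h₀, h₀mem⟩ := hne
  have capdef : Cap A B K = ⨅ h ∈ VAB A B K, dirichletForm K h := rfl
  have caple : ∀ f ∈ VAB A B K, Cap A B K ≤ dirichletForm K f := by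
    intro f hf
    rw [capdef]
    exact iInf₂_le f hf
  have hct : Cap A B K ≠ ⊤ := (lt_of_le_of_lt (caple h₀ h₀mem) h₀mem.2.2.2.2).ne
  have h2ct : 2 * Cap A B K ≠ ⊤ := ENNReal.mul_ne_top ENNReal.ofNat_ne_top hct
  constructor
  · -- existence of a minimizer
    -- a minimizing sequence
    have exch : ∀ n : ℕ, ∃ f, f ∈ VAB A B K ∧
        dirichletForm K f < Cap A B K + 2⁻¹ ^ (2*n) := by
      intro n
      have hεne : ((2:ℝ≥0∞)⁻¹ ^ (2*n)) ≠ 0 :=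
        pow_ne_zero _ (ENNReal.inv_ne_zero.mpr ENNReal.ofNat_ne_top)
      have hlt : Cap A B K < Cap A B K + 2⁻¹ ^ (2*n) := ENNReal.lt_add_right hct hεne
      by_contra hcon
      push_neg at hcon
      have hge : Cap A B K + 2⁻¹ ^ (2*n) ≤ Cap A B K := by
        rw [capdef]
        exact le_iInf₂ fun f hf => hcon f hf
      exact absurd hge (not_le.mpr hlt)
    choose hs hsmem hsE using exch
    -- limsup potential
    set H : Ω → ℝ := fun x => Filter.limsup (fun n => hs n x) Filter.atTop with hH
    have Hmeas : Measurable H := Measurable.limsup fun n => (hsmem n).1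
    have Hbd : ∀ x, 0 ≤ H x ∧ H x ≤ 1 := by
      intro x
      have hb2 : Filter.IsBoundedUnder (· ≥ ·) Filter.atTop (fun n => hs n x) :=
        Filter.isBoundedUnder_of ⟨0, fun n => ((hsmem n).2.2.2.1 x).1⟩
      constructor
      · exact Filter.le_limsup_of_frequently_le
          (Filter.Frequently.of_forall fun n => ((hsmem n).2.2.2.1 x).1)
          (Filter.isBoundedUnder_of ⟨1, fun n => ((hsmem n).2.2.2.1 x).2⟩)
      · exact Filter.limsup_le_of_le hb2.isCoboundedUnder_le
          (Filter.Eventually.of_forall fun n => ((hsmem n).2.2.2.1 x).2)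
    -- energy of consecutive half-differences is small
    have hdiff : ∀ n : ℕ, dInt K (fun x => (hs n x - hs (n+1) x)/2) ≤ 2 * 2⁻¹ ^ (2*n) := by
      intro n
      have hpar := dirichletForm_para K (hsmem n).1 (hsmem (n+1)).1
      have hmidmem := VAB_mid_mem (hsmem n) (hsmem (n+1))
      have h1 : 2 * Cap A B K + 2 * dirichletForm K (fun x => (hs n x - hs (n+1) x)/2)
          ≤ 2 * Cap A B K + 2 * 2⁻¹ ^ (2*n) := by
        calc 2 * Cap A B K + 2 * dirichletForm K (fun x => (hs n x - hs (n+1) x)/2)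
            ≤ 2 * dirichletForm K (fun x => (hs n x + hs (n+1) x)/2)
              + 2 * dirichletForm K (fun x => (hs n x - hs (n+1) x)/2) :=
              add_le_add (mul_le_mul_right (caple _ hmidmem) 2) le_rfl
          _ = dirichletForm K (hs n) + dirichletForm K (hs (n+1)) := hpar.symm
          _ ≤ (Cap A B K + 2⁻¹ ^ (2*n)) + (Cap A B K + 2⁻¹ ^ (2*(n+1))) :=
              add_le_add (hsE n).le (hsE (n+1)).le
          _ ≤ 2 * Cap A B K + 2 * 2⁻¹ ^ (2*n) := by
              have hmono : (2:ℝ≥0∞)⁻¹ ^ (2*(n+1)) ≤ 2⁻¹ ^ (2*n) :=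
                pow_le_pow_right_of_le_one' (ENNReal.inv_le_one.mpr one_le_two) (by omega)
              calc (Cap A B K + 2⁻¹ ^ (2*n)) + (Cap A B K + 2⁻¹ ^ (2*(n+1)))
                  ≤ (Cap A B K + 2⁻¹ ^ (2*n)) + (Cap A B K + 2⁻¹ ^ (2*n)) := by
                    exact add_le_add le_rfl (add_le_add le_rfl hmono)
                _ = 2 * Cap A B K + 2 * 2⁻¹ ^ (2*n) := by ring
      have h2 : 2 * dirichletForm K (fun x => (hs n x - hs (n+1) x)/2) ≤ 2 * 2⁻¹ ^ (2*n) :=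
        (ENNReal.add_le_add_iff_left h2ct).mp h1
      rw [dInt_eq]
      exact h2
    -- the weighted sum of squares integrates to a finite value
    have hwsum : ∫⁻ p, ∑' n : ℕ, 2^n * ENNReal.ofReal
        (((hs n p.2 - hs (n+1) p.2)/2 - (hs n p.1 - hs (n+1) p.1)/2)^2) ∂K ≤ 4 := by
      have hmeasn : ∀ n : ℕ, Measurable fun p : Ω × Ω => ENNReal.ofReal
          (((hs n p.2 - hs (n+1) p.2)/2 - (hs n p.1 - hs (n+1) p.1)/2)^2) := by
        intro n
        exact meas_incsq (((hsmem n).1.sub (hsmem (n+1)).1).div_const 2)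
      rw [lintegral_tsum fun n => ((hmeasn n).const_mul _).aemeasurable]
      have hterm : ∀ n : ℕ, ∫⁻ p, 2^n * ENNReal.ofReal
          (((hs n p.2 - hs (n+1) p.2)/2 - (hs n p.1 - hs (n+1) p.1)/2)^2) ∂K
          ≤ 2 * 2⁻¹ ^ n := by
        intro n
        rw [lintegral_const_mul _ (hmeasn n)]
        have : (∫⁻ p, ENNReal.ofReal
            (((hs n p.2 - hs (n+1) p.2)/2 - (hs n p.1 - hs (n+1) p.1)/2)^2) ∂K)
            = dInt K (fun x => (hs n x - hs (n+1) x)/2) := rfl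
        rw [this]
        calc (2:ℝ≥0∞)^n * dInt K (fun x => (hs n x - hs (n+1) x)/2)
            ≤ 2^n * (2 * 2⁻¹ ^ (2*n)) := mul_le_mul_right (hdiff n) _
          _ = 2 * 2⁻¹ ^ n := by
              rw [pow_mul]
              have h4 : (2:ℝ≥0∞) * 2⁻¹^2 = 2⁻¹ := by
                rw [sq, ← mul_assoc, ENNReal.mul_inv_cancel two_ne_zero ENNReal.ofNat_ne_top,
                  one_mul]
              calc (2:ℝ≥0∞)^n * (2 * (2⁻¹^2)^n) = 2 * ((2:ℝ≥0∞)^n * (2⁻¹^2)^n) := by ring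
                _ = 2 * ((2 * 2⁻¹^2)^n) := by rw [mul_pow]
                _ = 2 * 2⁻¹ ^ n := by rw [h4]
      calc (∑' n : ℕ, ∫⁻ p, 2^n * ENNReal.ofReal
            (((hs n p.2 - hs (n+1) p.2)/2 - (hs n p.1 - hs (n+1) p.1)/2)^2) ∂K)
          ≤ ∑' n : ℕ, 2 * (2:ℝ≥0∞)⁻¹ ^ n := ENNReal.tsum_le_tsum hterm
        _ = 2 * ∑' n : ℕ, (2:ℝ≥0∞)⁻¹ ^ n := ENNReal.tsum_mul_left
        _ = 4 := by
            rw [ENNReal.tsum_geometric, ENNReal.one_sub_inv_two, inv_inv]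
            norm_num
    have hfin : ∀ᵐ p ∂K, ∑' n : ℕ, 2^n * ENNReal.ofReal
        (((hs n p.2 - hs (n+1) p.2)/2 - (hs n p.1 - hs (n+1) p.1)/2)^2) < ⊤ := by
      refine ae_lt_top (Measurable.ennreal_tsum fun n => measurable_const.mul
        (meas_incsq (((hsmem n).1.sub (hsmem (n+1)).1).div_const 2))) ?_
      exact (lt_of_le_of_lt hwsum (by norm_num)).ne
    -- a.e. convergence of the increments to the increment of H
    have hconv : ∀ᵐ p ∂K, Filter.Tendsto (fun n => hs n p.2 - hs n p.1) Filter.atTop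
        (nhds (H p.2 - H p.1)) := by
      filter_upwards [hfin] with p hp
      have hterm : ∀ n : ℕ, (2:ℝ≥0∞)^n * ENNReal.ofReal
          (((hs n p.2 - hs (n+1) p.2)/2 - (hs n p.1 - hs (n+1) p.1)/2)^2)
          = ENNReal.ofReal ((2:ℝ)^n *
            ((hs n p.2 - hs (n+1) p.2)/2 - (hs n p.1 - hs (n+1) p.1)/2)^2) := by
        intro n
        rw [ENNReal.ofReal_mul (by positivity), ENNReal.ofReal_pow (by norm_num : (0:ℝ) ≤ 2)]
        norm_num
      rw [tsum_congr hterm] at hp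
      have hsum1 : Summable fun n : ℕ => (2:ℝ)^n *
          ((hs n p.2 - hs (n+1) p.2)/2 - (hs n p.1 - hs (n+1) p.1)/2)^2 := by
        have h := ENNReal.summable_toReal hp.ne
        refine h.congr fun n => ?_
        rw [ENNReal.toReal_ofReal (by positivity)]
      have hgeo : Summable fun n : ℕ => ((2:ℝ)⁻¹)^n :=
        summable_geometric_of_lt_one (by norm_num) (by norm_num)
      have habs : Summable fun n : ℕ =>
          |(hs n p.2 - hs (n+1) p.2)/2 - (hs n p.1 - hs (n+1) p.1)/2| := by
        exact Summable.of_nonneg_of_le (fun n => abs_nonneg _)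
          (fun n => abs_le_weight n _) (hsum1.add hgeo)
      have hdist : Summable fun n : ℕ =>
          dist (hs n p.2 - hs n p.1) (hs (n+1) p.2 - hs (n+1) p.1) := by
        refine (habs.mul_left 2).congr fun n => ?_
        rw [Real.dist_eq]
        have : (hs n p.2 - hs n p.1) - (hs (n+1) p.2 - hs (n+1) p.1)
            = 2 * ((hs n p.2 - hs (n+1) p.2)/2 - (hs n p.1 - hs (n+1) p.1)/2) := by ring
        rw [this, abs_mul]
        norm_num
      obtain ⟨l, hl⟩ := cauchySeq_tendsto_of_complete (cauchySeq_of_summable_dist hdist)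
      have hshift := limsup_shift (fun n => hs n p.1) (fun n => hs n p.2)
        (fun n => ((hsmem n).2.2.2.1 p.1).1) (fun n => ((hsmem n).2.2.2.1 p.1).2) hl
      have hHl : H p.2 - H p.1 = l := by
        rw [hH]
        simp only
        rw [hshift]
        ring
      rw [hHl]
      exact hl
    -- Fatou estimate
    have hEH : dirichletForm K H ≤ Cap A B K := by
      have hfatou : dInt K H ≤ 2 * Cap A B K := by
        have heq : dInt K H = ∫⁻ p, Filter.liminf
            (fun n => ENNReal.ofReal ((hs n p.2 - hs n p.1)^2)) Filter.atTop ∂K := by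
          refine lintegral_congr_ae ?_
          filter_upwards [hconv] with p hp
          have ht : Filter.Tendsto (fun n => ENNReal.ofReal ((hs n p.2 - hs n p.1)^2))
              Filter.atTop (nhds (ENNReal.ofReal ((H p.2 - H p.1)^2))) := by
            refine (ENNReal.continuous_ofReal.tendsto _).comp ?_
            exact ((continuous_pow 2).continuousAt.tendsto).comp hp
          exact ht.liminf_eq.symm
        calc dInt K H = _ := heq
          _ ≤ Filter.liminf (fun n =>
              ∫⁻ p, ENNReal.ofReal ((hs n p.2 - hs n p.1)^2) ∂K) Filter.atTop :=
              lintegral_liminf_le fun n => meas_incsq (hsmem n).1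
          _ ≤ Filter.liminf (fun n => 2 * (Cap A B K + 2⁻¹ ^ (2*n))) Filter.atTop := by
              refine Filter.liminf_le_liminf (Filter.Eventually.of_forall fun n => ?_) 
              have : (∫⁻ p, ENNReal.ofReal ((hs n p.2 - hs n p.1)^2) ∂K) = dInt K (hs n) := rfl
              rw [this, dInt_eq]
              exact mul_le_mul_right (hsE n).le 2
          _ = 2 * Cap A B K := by
              have hp0 : Filter.Tendsto (fun n : ℕ => (2:ℝ≥0∞)⁻¹ ^ (2*n)) Filter.atTop
                  (nhds 0) := by
                have hrw : (fun n : ℕ => (2:ℝ≥0∞)⁻¹ ^ (2*n))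
                    = fun n : ℕ => ((2:ℝ≥0∞)⁻¹^2)^n := by
                  funext n; rw [pow_mul]
                rw [hrw]
                refine ENNReal.tendsto_pow_atTop_nhds_zero_of_lt_one ?_
                calc ((2:ℝ≥0∞)⁻¹)^2 ≤ 2⁻¹ := by
                      rw [sq]
                      exact mul_le_of_le_one_left zero_le
                        (ENNReal.inv_le_one.mpr one_le_two)
                  _ < 1 := ENNReal.inv_lt_one.mpr one_lt_two
              have ht : Filter.Tendsto (fun n : ℕ => 2 * (Cap A B K + 2⁻¹ ^ (2*n)))
                  Filter.atTop (nhds (2 * (Cap A B K + 0))) :=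
                ENNReal.Tendsto.const_mul (Filter.Tendsto.const_add _ hp0)
                  (Or.inr ENNReal.ofNat_ne_top)
              rw [add_zero] at ht
              exact ht.liminf_eq
      rw [dirichletForm_eq_dInt]
      calc (2:ℝ≥0∞)⁻¹ * dInt K H ≤ 2⁻¹ * (2 * Cap A B K) := mul_le_mul_right hfatou _
        _ = Cap A B K := by
            rw [← mul_assoc, ENNReal.inv_mul_cancel two_ne_zero ENNReal.ofNat_ne_top, one_mul]
    have Hmem : H ∈ VAB A B K := by
      refine ⟨Hmeas, ?_, ?_, Hbd, lt_of_le_of_lt hEH hct.lt_top⟩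
      · intro x hx
        have hcst : (fun n : ℕ => hs n x) = fun _ => (1:ℝ) :=
          funext fun n => (hsmem n).2.1 x hx
        show Filter.limsup (fun n => hs n x) Filter.atTop = 1
        rw [hcst]
        exact Filter.limsup_const 1
      · intro x hx
        have hcst : (fun n : ℕ => hs n x) = fun _ => (0:ℝ) :=
          funext fun n => (hsmem n).2.2.1 x hx
        show Filter.limsup (fun n => hs n x) Filter.atTop = 0
        rw [hcst]
        exact Filter.limsup_const 0
    exact ⟨H, Hmem, le_antisymm hEH (caple H Hmem)⟩
  · -- essential uniqueness
    intro f hf g hg hfc hgc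
    have hmid := VAB_mid_mem hf hg
    have hpar := dirichletForm_para K hf.1 hg.1
    have h1 : 2 * Cap A B K + 2 * dirichletForm K (fun x => (f x - g x)/2)
        ≤ 2 * Cap A B K + 0 := by
      rw [add_zero]
      calc 2 * Cap A B K + 2 * dirichletForm K (fun x => (f x - g x)/2)
          ≤ 2 * dirichletForm K (fun x => (f x + g x)/2)
            + 2 * dirichletForm K (fun x => (f x - g x)/2) :=
            add_le_add (mul_le_mul_right (caple _ hmid) 2) le_rfl
        _ = dirichletForm K f + dirichletForm K g := hpar.symm
        _ = 2 * Cap A B K := by rw [hfc, hgc, two_mul]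
    have h2 : dirichletForm K (fun x => (f x - g x)/2) = 0 := by
      have h2' : 2 * dirichletForm K (fun x => (f x - g x)/2) ≤ 0 :=
        (ENNReal.add_le_add_iff_left h2ct).mp h1
      have := le_antisymm h2' zero_le
      rcases mul_eq_zero.mp this with h | h
      · exact absurd h two_ne_zero
      · exact h
    have h3 : dInt K (fun x => (f x - g x)/2) = 0 := by
      rw [dInt_eq, h2, mul_zero]
    have h4 := (lintegral_eq_zero_iff
      (meas_incsq ((hf.1.sub hg.1).div_const 2))).mp h3
    filter_upwards [h4] with p hp
    have hp' : ENNReal.ofReal (((f p.2 - g p.2)/2 - (f p.1 - g p.1)/2)^2) = 0 := hp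
    have h5 : ((f p.2 - g p.2)/2 - (f p.1 - g p.1)/2)^2 ≤ 0 := ENNReal.ofReal_eq_zero.mp hp'
    have h6 : ((f p.2 - g p.2)/2 - (f p.1 - g p.1)/2) = 0 := by
      nlinarith [sq_nonneg ((f p.2 - g p.2)/2 - (f p.1 - g p.1)/2)]
    linarith
end

section
/- Equilibrium charges: under the assumption K((A∪B)×Ω)<∞, the equilibrium charges Q_A = ∫_A (−L h_AB)(x) μ(dx) and Q_B = ∫_B (−L h_AB)(x) μ(dx) of the Dirichlet minimizer h_AB satisfy Q_A = Cap(A,B) and Q_B = −Cap(A,B); in particular Cap(A,B) = E(h_AB) = ∫_A (−L h_AB) dμ. -/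
open MeasureTheory ProbabilityTheory ENNReal Set Filter
open scoped Classical

section EqCharges

open MeasureTheory ProbabilityTheory ENNReal Set
open scoped Classical

variable {Ω : Type*} [MeasurableSpace Ω]

private lemma aux_quad' {c q : ℝ} (hq : 0 ≤ q) (h : ∀ t : ℝ, 0 ≤ t * c + t ^ 2 * q) : c = 0 := by
  have key : ∀ ε : ℝ, 0 < ε → c ≤ ε ∧ -c ≤ ε := by
    intro ε hε
    have hd : 0 < ε / (q + 1) := by positivity
    have h1 := h (-(ε / (q + 1)))
    have h2 := h (ε / (q + 1))
    have hq1 : q * (ε / (q + 1)) ≤ ε := by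
      rw [mul_div_assoc', div_le_iff₀ (by linarith)]
      nlinarith
    exact ⟨by nlinarith, by nlinarith⟩
  have h1 : c ≤ 0 := le_of_forall_pos_le_add (by intro ε hε; simpa using (key ε hε).1)
  have h2 : -c ≤ 0 := le_of_forall_pos_le_add (by intro ε hε; simpa using (key ε hε).2)
  linarith

private noncomputable def clip' (r : ℝ) : ℝ := max 0 (min r 1)

private lemma clip'_mem (r : ℝ) : 0 ≤ clip' r ∧ clip' r ≤ 1 :=
  ⟨le_max_left _ _, max_le (by norm_num) (min_le_right _ _)⟩

private lemma clip'_one : clip' 1 = 1 := by norm_num [clip']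
private lemma clip'_zero : clip' 0 = 0 := by norm_num [clip']

private lemma clip'_sq_le (a b : ℝ) : (clip' a - clip' b) ^ 2 ≤ (a - b) ^ 2 := by
  have h1 : |max 0 (min a 1) - max 0 (min b 1)| ≤ |min a 1 - min b 1| := by
    simpa [max_comm] using abs_max_sub_max_le_abs (min a 1) (min b 1) 0
  have h2 : |min a 1 - min b 1| ≤ |a - b| := by
    simpa [abs_sub_comm] using (abs_min_sub_min_le_max a 1 b 1).trans (by simp)
  rw [← sq_abs (clip' a - clip' b), ← sq_abs (a - b)]
  exact pow_le_pow_left₀ (abs_nonneg _) (h1.trans h2) 2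

private lemma measurable_clip' : Measurable clip' :=
  measurable_const.max (measurable_id.min measurable_const)

private lemma isSFiniteKernel_of_ptwise_finite (k : Kernel Ω Ω) (hk : ∀ x, k x univ < ⊤) :
    IsSFiniteKernel k := by
  have hm : Measurable fun x => k x univ := k.measurable_coe MeasurableSet.univ
  set s : ℕ → Set Ω := fun n =>
    {x | k x univ < n + 1} \ ⋃ m ∈ Finset.range n, {x | k x univ < m + 1} with hs_def
  have hmeas : ∀ n, MeasurableSet (s n) := by
    intro n
    refine (hm measurableSet_Iio).diff ?_
    exact MeasurableSet.biUnion (Finset.range n).countable_toSet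
      (fun m _ => hm measurableSet_Iio)
  have hex : ∀ x, ∃ n : ℕ, k x univ < n + 1 := by
    intro x
    obtain ⟨n, hn⟩ := ENNReal.exists_nat_gt (hk x).ne
    exact ⟨n, hn.trans (by exact_mod_cast Nat.lt_succ_self n)⟩
  have hunique : ∀ x, ∀ n, x ∈ s n ↔ n = Nat.find (hex x) := by
    intro x n
    constructor
    · rintro ⟨h1, h2⟩
      simp only [mem_iUnion, Finset.mem_range, not_exists, mem_setOf_eq] at h2
      have h3 : Nat.find (hex x) ≤ n := Nat.find_le h1
      rcases lt_or_eq_of_le h3 with h4 | h4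
      · exact absurd (Nat.find_spec (hex x)) (h2 _ h4)
      · exact h4.symm
    · rintro rfl
      refine ⟨Nat.find_spec (hex x), ?_⟩
      simp only [mem_iUnion, Finset.mem_range, not_exists, mem_setOf_eq]
      exact fun m hm' => Nat.find_min (hex x) hm'
  refine ⟨⟨fun n => Kernel.piecewise (hmeas n) k 0, fun n => ?_, ?_⟩⟩
  · refine ⟨⟨(n : ℝ≥0∞) + 1, by simp [ENNReal.add_lt_top], fun a => ?_⟩⟩
    rw [Kernel.piecewise_apply']
    split_ifs with ha
    · exact le_of_lt ha.1
    · simp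
  · ext a t ht : 2
    rw [Kernel.sum_apply' _ _ ht]
    simp_rw [Kernel.piecewise_apply']
    rw [tsum_eq_single (Nat.find (hex a)) ?_]
    · rw [if_pos ((hunique a _).mpr rfl)]
    · intro n hn
      rw [if_neg fun h => hn ((hunique a n).mp h)]
      simp

private lemma restrict_prod_eq_compProd (k : Kernel Ω Ω) [IsSFiniteKernel k]
    (μ : Measure Ω) [SigmaFinite μ] (K : Measure (Ω × Ω))
    (hKrep : ∀ C D : Set Ω, MeasurableSet C → MeasurableSet D →
      K (C ×ˢ D) = ∫⁻ x in C, k x D ∂μ)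
    (C : Set Ω) (hC : MeasurableSet C) (hfin : K (C ×ˢ univ) < ⊤) :
    K.restrict (C ×ˢ univ) = (μ.restrict C) ⊗ₘ k := by
  have hfinM : IsFiniteMeasure (K.restrict (C ×ˢ univ)) := by
    constructor
    rw [Measure.restrict_apply MeasurableSet.univ]
    simpa using hfin
  have hrect : ∀ s t : Set Ω, MeasurableSet s → MeasurableSet t →
      K.restrict (C ×ˢ univ) (s ×ˢ t) = (μ.restrict C ⊗ₘ k) (s ×ˢ t) := by
    intro s t hs ht
    rw [Measure.restrict_apply (hs.prod ht), Measure.compProd_apply_prod hs ht,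
      Set.prod_inter_prod, Set.inter_univ, hKrep _ _ (hs.inter hC) ht,
      Measure.restrict_restrict hs]
  refine @ext_of_generate_finite _ _ _ _
    (image2 (· ×ˢ ·) { s : Set Ω | MeasurableSet s } { t : Set Ω | MeasurableSet t })
    generateFrom_prod.symm isPiSystem_prod hfinM ?_ ?_
  · rintro u ⟨s, hs, t, ht, rfl⟩
    exact hrect s t hs ht
  · simpa [Set.prod_univ] using hrect univ univ MeasurableSet.univ MeasurableSet.univ

private lemma restrict_map_swap (K : Measure (Ω × Ω))
    (hKsym : ∀ C D : Set Ω, MeasurableSet C → MeasurableSet D → K (C ×ˢ D) = K (D ×ˢ C))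
    (C : Set Ω) (hC : MeasurableSet C) (hfin : K (C ×ˢ univ) < ⊤) :
    (K.restrict ((univ : Set Ω) ×ˢ C)).map Prod.swap = K.restrict (C ×ˢ univ) := by
  have hfinM : IsFiniteMeasure ((K.restrict ((univ : Set Ω) ×ˢ C)).map Prod.swap) := by
    constructor
    rw [Measure.map_apply measurable_swap MeasurableSet.univ, Set.preimage_univ,
      Measure.restrict_apply MeasurableSet.univ, Set.univ_inter]
    calc K ((univ : Set Ω) ×ˢ C) = K (C ×ˢ univ) := hKsym univ C MeasurableSet.univ hC ▸ rfl
    _ < ⊤ := hfin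
  refine @ext_of_generate_finite _ _ _ _
    (image2 (· ×ˢ ·) { s : Set Ω | MeasurableSet s } { t : Set Ω | MeasurableSet t })
    generateFrom_prod.symm isPiSystem_prod hfinM ?_ ?_
  · rintro u ⟨s, hs, t, ht, rfl⟩
    rw [Measure.map_apply measurable_swap (hs.prod ht),
      Measure.restrict_apply (hs.prod ht)]
    have hpre : Prod.swap ⁻¹' (s ×ˢ t) = t ×ˢ s := by
      ext p; simp [Set.mem_prod, And.comm]
    rw [hpre, Measure.restrict_apply (ht.prod hs), Set.prod_inter_prod, Set.prod_inter_prod]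
    simp only [Set.inter_univ, Set.univ_inter]
    exact hKsym t (s ∩ C) ht (hs.inter hC)
  · rw [Measure.map_apply measurable_swap MeasurableSet.univ]
    simp only [Set.preimage_univ, Measure.restrict_apply MeasurableSet.univ, Set.univ_inter]
    exact hKsym univ C MeasurableSet.univ hC

/-- From finiteness of the Dirichlet form, square-integrability of the increment. -/
private lemma integrable_sq_of_dirichlet (K : Measure (Ω × Ω)) {f : Ω → ℝ} (hf : Measurable f)
    (hfin : dirichletForm K f < ⊤) :
    Integrable (fun p : Ω × Ω => (f p.2 - f p.1) ^ 2) K := by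
  have hmeas : Measurable fun p : Ω × Ω => (f p.2 - f p.1) ^ 2 :=
    ((hf.comp measurable_snd).sub (hf.comp measurable_fst)).pow_const 2
  refine ⟨hmeas.aestronglyMeasurable, ?_⟩
  rw [HasFiniteIntegral]
  have heq : ∀ p : Ω × Ω, ‖(f p.2 - f p.1) ^ 2‖ₑ = ENNReal.ofReal ((f p.2 - f p.1) ^ 2) :=
    fun p => Real.enorm_eq_ofReal (sq_nonneg _)
  simp_rw [heq]
  by_contra htop
  push_neg at htop
  rw [top_le_iff] at htop
  rw [dirichletForm, htop, ENNReal.mul_top (by norm_num)] at hfin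
  exact absurd hfin (lt_irrefl _)

/-- Dirichlet form in terms of a Bochner integral. -/
private lemma dirichletForm_eq_ofReal (K : Measure (Ω × Ω)) {f : Ω → ℝ}
    (hint : Integrable (fun p : Ω × Ω => (f p.2 - f p.1) ^ 2) K) :
    dirichletForm K f = 2⁻¹ * ENNReal.ofReal (∫ p, (f p.2 - f p.1) ^ 2 ∂K) := by
  rw [dirichletForm, ofReal_integral_eq_lintegral_ofReal hint
    (Filter.Eventually.of_forall fun p => sq_nonneg _)]

private lemma dirichletForm_toReal (K : Measure (Ω × Ω)) {f : Ω → ℝ}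
    (hint : Integrable (fun p : Ω × Ω => (f p.2 - f p.1) ^ 2) K) :
    (dirichletForm K f).toReal = 2⁻¹ * ∫ p, (f p.2 - f p.1) ^ 2 ∂K := by
  rw [dirichletForm_eq_ofReal K hint, ENNReal.toReal_mul, ENNReal.toReal_ofReal
    (integral_nonneg fun p => sq_nonneg _)]
  norm_num

end EqCharges

section Cross
open MeasureTheory ProbabilityTheory ENNReal Set
open scoped Classical
variable {Ω : Type*} [MeasurableSpace Ω]

set_option maxHeartbeats 1000000 in
private lemma cross_zero (K : Measure (Ω × Ω)) (A B : Set Ω)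
    (h : Ω → ℝ) (hmem : h ∈ VAB A B K) (hmin : dirichletForm K h = Cap A B K)
    (g : Ω → ℝ) (hg : Measurable g) (hgA : ∀ x ∈ A, g x = 0) (hgB : ∀ x ∈ B, g x = 0)
    (hg2 : Integrable (fun p : Ω × Ω => (g p.2 - g p.1) ^ 2) K) :
    ∫ p : Ω × Ω, (h p.2 - h p.1) * (g p.2 - g p.1) ∂K = 0 := by
  obtain ⟨hhm, hhA, hhB, hh01, hhfin⟩ := hmem
  have hh2 : Integrable (fun p : Ω × Ω => (h p.2 - h p.1) ^ 2) K :=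
    integrable_sq_of_dirichlet K hhm hhfin
  have hcross : Integrable (fun p : Ω × Ω => (h p.2 - h p.1) * (g p.2 - g p.1)) K := by
    have hbd : Integrable (fun p : Ω × Ω =>
        2⁻¹ * ((h p.2 - h p.1) ^ 2 + (g p.2 - g p.1) ^ 2)) K := (hh2.add hg2).const_mul 2⁻¹
    refine Integrable.mono' hbd ?_ (Filter.Eventually.of_forall fun p => ?_)
    · exact (((hhm.comp measurable_snd).sub (hhm.comp measurable_fst)).mul
        ((hg.comp measurable_snd).sub (hg.comp measurable_fst))).aestronglyMeasurable
    · show ‖(h p.2 - h p.1) * (g p.2 - g p.1)‖ ≤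
        2⁻¹ * ((h p.2 - h p.1) ^ 2 + (g p.2 - g p.1) ^ 2)
      rw [Real.norm_eq_abs, abs_mul]
      nlinarith [sq_nonneg (|h p.2 - h p.1| - |g p.2 - g p.1|), sq_abs (h p.2 - h p.1),
        sq_abs (g p.2 - g p.1)]
  have hexp : ∀ t : ℝ, Integrable
      (fun p : Ω × Ω => ((h p.2 + t * g p.2) - (h p.1 + t * g p.1)) ^ 2) K ∧
      ∫ p : Ω × Ω, ((h p.2 + t * g p.2) - (h p.1 + t * g p.1)) ^ 2 ∂K =
        (∫ p : Ω × Ω, (h p.2 - h p.1) ^ 2 ∂K)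
          + 2 * t * (∫ p : Ω × Ω, (h p.2 - h p.1) * (g p.2 - g p.1) ∂K)
          + t ^ 2 * ∫ p : Ω × Ω, (g p.2 - g p.1) ^ 2 ∂K := by
    intro t
    have hptr : ∀ p : Ω × Ω, ((h p.2 + t * g p.2) - (h p.1 + t * g p.1)) ^ 2
        = (h p.2 - h p.1) ^ 2 + 2 * t * ((h p.2 - h p.1) * (g p.2 - g p.1))
          + t ^ 2 * (g p.2 - g p.1) ^ 2 := fun p => by ring
    have hIa : Integrable (fun p : Ω × Ω => (h p.2 - h p.1) ^ 2
        + 2 * t * ((h p.2 - h p.1) * (g p.2 - g p.1))) K := hh2.add (hcross.const_mul (2 * t))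
    have hIb : Integrable (fun p : Ω × Ω => (h p.2 - h p.1) ^ 2
        + 2 * t * ((h p.2 - h p.1) * (g p.2 - g p.1)) + t ^ 2 * (g p.2 - g p.1) ^ 2) K :=
      hIa.add (hg2.const_mul (t ^ 2))
    constructor
    · exact hIb.congr (Filter.Eventually.of_forall fun p => (hptr p).symm)
    · calc ∫ p : Ω × Ω, ((h p.2 + t * g p.2) - (h p.1 + t * g p.1)) ^ 2 ∂K
          = ∫ p : Ω × Ω, (h p.2 - h p.1) ^ 2
              + 2 * t * ((h p.2 - h p.1) * (g p.2 - g p.1))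
              + t ^ 2 * (g p.2 - g p.1) ^ 2 ∂K :=
            integral_congr_ae (Filter.Eventually.of_forall fun p => hptr p)
        _ = (∫ p : Ω × Ω, (h p.2 - h p.1) ^ 2
              + 2 * t * ((h p.2 - h p.1) * (g p.2 - g p.1)) ∂K)
              + ∫ p : Ω × Ω, t ^ 2 * (g p.2 - g p.1) ^ 2 ∂K :=
            integral_add hIa (hg2.const_mul (t ^ 2))
        _ = _ := by
            rw [integral_add hh2 (hcross.const_mul (2 * t)), integral_const_mul,
              integral_const_mul]
  have hineq : ∀ t : ℝ,
      0 ≤ t * (∫ p : Ω × Ω, (h p.2 - h p.1) * (g p.2 - g p.1) ∂K)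
        + t ^ 2 * (2⁻¹ * ∫ p : Ω × Ω, (g p.2 - g p.1) ^ 2 ∂K) := by
    intro t
    obtain ⟨hintt, heqt⟩ := hexp t
    have hft : dirichletForm K (fun x => h x + t * g x) < ⊤ := by
      rw [dirichletForm_eq_ofReal K (f := fun x => h x + t * g x) hintt]
      exact ENNReal.mul_lt_top (by norm_num) ENNReal.ofReal_lt_top
    have hflee : dirichletForm K (fun x => clip' (h x + t * g x))
        ≤ dirichletForm K (fun x => h x + t * g x) := by
      refine mul_le_mul_right (lintegral_mono fun p => ?_) _
      exact ENNReal.ofReal_le_ofReal (clip'_sq_le _ _)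
    have hfmem : (fun x => clip' (h x + t * g x)) ∈ VAB A B K := by
      refine ⟨measurable_clip'.comp (hhm.add (measurable_const.mul hg)), ?_, ?_, ?_, ?_⟩
      · intro x hx; simp only [hhA x hx, hgA x hx, mul_zero, add_zero, clip'_one]
      · intro x hx; simp only [hhB x hx, hgB x hx, mul_zero, add_zero, clip'_zero]
      · exact fun x => clip'_mem _
      · exact lt_of_le_of_lt hflee hft
    have hcap : dirichletForm K h ≤ dirichletForm K (fun x => clip' (h x + t * g x)) := by
      rw [hmin]
      exact iInf_le_of_le _ (iInf_le_of_le hfmem le_rfl)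
    have hkey : dirichletForm K h ≤ dirichletForm K (fun x => h x + t * g x) :=
      le_trans hcap hflee
    have hlhs := dirichletForm_toReal K hh2
    have hrhs := dirichletForm_toReal K (f := fun x => h x + t * g x) hintt
    have hle := (ENNReal.toReal_le_toReal (ne_of_lt hhfin) (ne_of_lt hft)).mpr hkey
    rw [hlhs, hrhs] at hle
    rw [heqt] at hle
    linarith [hle]
  have hq : (0:ℝ) ≤ 2⁻¹ * ∫ p : Ω × Ω, (g p.2 - g p.1) ^ 2 ∂K :=
    mul_nonneg (by norm_num) (integral_nonneg fun p => sq_nonneg _)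
  exact aux_quad' hq hineq

end Cross

set_option maxHeartbeats 1000000

/-- **Equilibrium charges**: `Q_A = Cap(A,B)` and `Q_B = -Cap(A,B)`. -/
theorem equilibrium_charges
    {Ω : Type*} [MeasurableSpace Ω] [TopologicalSpace Ω] [PolishSpace Ω] [BorelSpace Ω]
    (k : Kernel Ω Ω) (hk : ∀ x, k x univ < ⊤)
    (μ : Measure Ω) [SigmaFinite μ]
    (K : Measure (Ω × Ω)) [SigmaFinite K]
    (hKrep : ∀ C D : Set Ω, MeasurableSet C → MeasurableSet D →
      K (C ×ˢ D) = ∫⁻ x in C, k x D ∂μ)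
    (hKsym : ∀ C D : Set Ω, MeasurableSet C → MeasurableSet D → K (C ×ˢ D) = K (D ×ˢ C))
    (A B : Set Ω) (hA : MeasurableSet A) (hB : MeasurableSet B) (hd : Disjoint A B)
    (hμA : 0 < μ A) (hμB : 0 < μ B)
    (hKAB : K ((A ∪ B) ×ˢ univ) < ⊤) (hne : (VAB A B K).Nonempty)
    (hAB : Ω → ℝ) (hABmem : hAB ∈ VAB A B K) (hABmin : dirichletForm K hAB = Cap A B K) :
    ∫ x in A, negL k hAB x ∂μ = (Cap A B K).toReal ∧
    ∫ x in B, negL k hAB x ∂μ = -(Cap A B K).toReal := by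
  classical
  obtain ⟨hhm, hhA, hhB, hh01, hhfin⟩ := hABmem
  haveI : IsSFiniteKernel k := isSFiniteKernel_of_ptwise_finite k hk
  have hKA : K (A ×ˢ univ) < ⊤ :=
    lt_of_le_of_lt (measure_mono (Set.prod_mono Set.subset_union_left le_rfl)) hKAB
  have hKB : K (B ×ˢ univ) < ⊤ :=
    lt_of_le_of_lt (measure_mono (Set.prod_mono Set.subset_union_right le_rfl)) hKAB
  have hh2 : Integrable (fun p : Ω × Ω => (hAB p.2 - hAB p.1) ^ 2) K :=
    integrable_sq_of_dirichlet K hhm hhfin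
  have hFmeas : Measurable fun p : Ω × Ω => hAB p.1 - hAB p.2 :=
    (hhm.comp measurable_fst).sub (hhm.comp measurable_snd)
  have hGmeas : Measurable fun p : Ω × Ω => hAB p.2 - hAB p.1 :=
    (hhm.comp measurable_snd).sub (hhm.comp measurable_fst)
  have hFbd : ∀ p : Ω × Ω, ‖hAB p.1 - hAB p.2‖ ≤ 1 := by
    intro p
    rw [Real.norm_eq_abs, abs_sub_le_iff]
    constructor <;> [linarith [(hh01 p.1).2, (hh01 p.2).1]; linarith [(hh01 p.2).2, (hh01 p.1).1]]
  have hGbd : ∀ p : Ω × Ω, ‖hAB p.2 - hAB p.1‖ ≤ 1 := by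
    intro p
    rw [Real.norm_eq_abs, abs_sub_comm]
    exact (Real.norm_eq_abs _) ▸ hFbd p
  -- Per-set facts
  have main : ∀ C : Set Ω, MeasurableSet C → K (C ×ˢ univ) < ⊤ →
      (∫ x in C, negL k hAB x ∂μ
          = ∫ p, (hAB p.1 - hAB p.2) ∂(K.restrict (C ×ˢ univ))) ∧
      (∫ p : Ω × Ω, (hAB p.2 - hAB p.1)
            * (C.indicator (fun _ => (1:ℝ)) p.2 - C.indicator (fun _ => (1:ℝ)) p.1) ∂K
          = 2 * ∫ p, (hAB p.1 - hAB p.2) ∂(K.restrict (C ×ˢ univ))) := by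
    intro C hC hfin
    haveI hfinM : IsFiniteMeasure (K.restrict (C ×ˢ univ)) := by
      constructor
      rw [Measure.restrict_apply MeasurableSet.univ, Set.univ_inter]
      exact hfin
    haveI hfinM' : IsFiniteMeasure (K.restrict ((univ : Set Ω) ×ˢ C)) := by
      constructor
      rw [Measure.restrict_apply MeasurableSet.univ, Set.univ_inter]
      exact (hKsym univ C MeasurableSet.univ hC).trans_lt hfin
    have hFint : Integrable (fun p : Ω × Ω => hAB p.1 - hAB p.2) (K.restrict (C ×ˢ univ)) :=
      Integrable.mono' (integrable_const 1) hFmeas.aestronglyMeasurable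
        (Filter.Eventually.of_forall hFbd)
    have hGint : Integrable (fun p : Ω × Ω => hAB p.2 - hAB p.1)
        (K.restrict ((univ : Set Ω) ×ˢ C)) :=
      Integrable.mono' (integrable_const 1) hGmeas.aestronglyMeasurable
        (Filter.Eventually.of_forall hGbd)
    have hKrC : K.restrict (C ×ˢ univ) = μ.restrict C ⊗ₘ k :=
      restrict_prod_eq_compProd k μ K hKrep C hC hfin
    have hswC : (K.restrict ((univ : Set Ω) ×ˢ C)).map Prod.swap = K.restrict (C ×ˢ univ) :=
      restrict_map_swap K hKsym C hC hfin
    -- Fubini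
    have fub : ∫ x in C, negL k hAB x ∂μ
        = ∫ p, (hAB p.1 - hAB p.2) ∂(K.restrict (C ×ˢ univ)) := by
      have hFint' : Integrable (fun p : Ω × Ω => hAB p.1 - hAB p.2) (μ.restrict C ⊗ₘ k) := by
        rw [← hKrC]; exact hFint
      have := Measure.integral_compProd (f := fun p : Ω × Ω => hAB p.1 - hAB p.2)
        (μ := μ.restrict C) (κ := k) hFint'
      rw [hKrC]
      rw [this]
      rfl
    -- swap
    have swapC : ∫ p, (hAB p.2 - hAB p.1) ∂(K.restrict ((univ : Set Ω) ×ˢ C))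
        = ∫ p, (hAB p.1 - hAB p.2) ∂(K.restrict (C ×ˢ univ)) := by
      rw [← hswC, integral_map measurable_swap.aemeasurable hFmeas.aestronglyMeasurable]
      rfl
    refine ⟨fub, ?_⟩
    -- indicator computation
    have hptws : ∀ p : Ω × Ω, (hAB p.2 - hAB p.1)
          * (C.indicator (fun _ => (1:ℝ)) p.2 - C.indicator (fun _ => (1:ℝ)) p.1)
        = ((univ : Set Ω) ×ˢ C).indicator (fun q : Ω × Ω => hAB q.2 - hAB q.1) p
          - (C ×ˢ univ).indicator (fun q : Ω × Ω => hAB q.2 - hAB q.1) p := by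
      intro p
      by_cases h1 : p.1 ∈ C <;> by_cases h2 : p.2 ∈ C <;>
        simp [Set.indicator_apply, h1, h2, Set.mem_prod] <;> ring
    have hI1 : Integrable
        (((univ : Set Ω) ×ˢ C).indicator (fun q : Ω × Ω => hAB q.2 - hAB q.1)) K := by
      rw [integrable_indicator_iff (MeasurableSet.univ.prod hC)]
      exact hGint
    have hI2 : Integrable ((C ×ˢ univ).indicator (fun q : Ω × Ω => hAB q.2 - hAB q.1)) K := by
      rw [integrable_indicator_iff (hC.prod MeasurableSet.univ)]
      exact Integrable.mono' (integrable_const 1) hGmeas.aestronglyMeasurable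
        (Filter.Eventually.of_forall hGbd)
    calc ∫ p : Ω × Ω, (hAB p.2 - hAB p.1)
            * (C.indicator (fun _ => (1:ℝ)) p.2 - C.indicator (fun _ => (1:ℝ)) p.1) ∂K
        = ∫ p : Ω × Ω, (((univ : Set Ω) ×ˢ C).indicator (fun q : Ω × Ω => hAB q.2 - hAB q.1) p
            - (C ×ˢ univ).indicator (fun q : Ω × Ω => hAB q.2 - hAB q.1) p) ∂K :=
          integral_congr_ae (Filter.Eventually.of_forall hptws)
      _ = (∫ p : Ω × Ω, ((univ : Set Ω) ×ˢ C).indicator (fun q : Ω × Ω => hAB q.2 - hAB q.1) p ∂K)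
            - ∫ p : Ω × Ω, (C ×ˢ univ).indicator (fun q : Ω × Ω => hAB q.2 - hAB q.1) p ∂K :=
          integral_sub hI1 hI2
      _ = (∫ p, (hAB p.2 - hAB p.1) ∂(K.restrict ((univ : Set Ω) ×ˢ C)))
            - ∫ p, (hAB p.2 - hAB p.1) ∂(K.restrict (C ×ˢ univ)) := by
          rw [integral_indicator (MeasurableSet.univ.prod hC),
            integral_indicator (hC.prod MeasurableSet.univ)]
      _ = (∫ p, (hAB p.1 - hAB p.2) ∂(K.restrict (C ×ˢ univ)))
            - -(∫ p, (hAB p.1 - hAB p.2) ∂(K.restrict (C ×ˢ univ))) := by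
          rw [swapC]
          congr 1
          rw [← integral_neg]
          exact integral_congr_ae (Filter.Eventually.of_forall fun p => by ring)
      _ = 2 * ∫ p, (hAB p.1 - hAB p.2) ∂(K.restrict (C ×ˢ univ)) := by ring
  obtain ⟨fubA, indA⟩ := main A hA hKA
  obtain ⟨fubB, indB⟩ := main B hB hKB
  -- integrability of squared indicator increments
  have hIndSq : ∀ C : Set Ω, MeasurableSet C → K (C ×ˢ univ) < ⊤ →
      Integrable (fun p : Ω × Ω =>
        (C.indicator (fun _ => (1:ℝ)) p.2 - C.indicator (fun _ => (1:ℝ)) p.1) ^ 2) K := by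
    intro C hC hfin
    have hSm : MeasurableSet ((C ×ˢ (univ : Set Ω)) ∪ ((univ : Set Ω) ×ˢ C)) :=
      (hC.prod MeasurableSet.univ).union (MeasurableSet.univ.prod hC)
    have hSfin : K ((C ×ˢ (univ : Set Ω)) ∪ ((univ : Set Ω) ×ˢ C)) < ⊤ := by
      refine lt_of_le_of_lt (measure_union_le _ _) ?_
      rw [hKsym univ C MeasurableSet.univ hC]
      exact ENNReal.add_lt_top.mpr ⟨hfin, hfin⟩
    have hIndBd : Integrable
        (((C ×ˢ (univ : Set Ω)) ∪ ((univ : Set Ω) ×ˢ C)).indicator (fun _ => (1:ℝ))) K := by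
      rw [integrable_indicator_iff hSm]
      exact (integrableOn_const_iff (C := (1:ℝ))).mpr (Or.inr hSfin)
    have hm : Measurable fun p : Ω × Ω =>
        (C.indicator (fun _ => (1:ℝ)) p.2 - C.indicator (fun _ => (1:ℝ)) p.1) ^ 2 := by
      have hi : Measurable (C.indicator (fun _ => (1:ℝ))) :=
        measurable_const.indicator hC
      exact ((hi.comp measurable_snd).sub (hi.comp measurable_fst)).pow_const 2
    refine Integrable.mono' hIndBd hm.aestronglyMeasurable
      (Filter.Eventually.of_forall fun p => ?_)
    by_cases h1 : p.1 ∈ C <;> by_cases h2 : p.2 ∈ C <;>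
      simp [Set.indicator_apply, h1, h2, Set.mem_prod, Real.norm_eq_abs, abs_of_nonneg]
  have hIndSqA := hIndSq A hA hKA
  have hIndSqB := hIndSq B hB hKB
  -- the two perturbations
  have hgA : ∀ x ∈ A, hAB x - A.indicator (fun _ => (1:ℝ)) x = 0 := by
    intro x hx; simp [hhA x hx, Set.indicator_of_mem hx]
  have hgB : ∀ x ∈ B, hAB x - A.indicator (fun _ => (1:ℝ)) x = 0 := by
    intro x hx
    have hxA : x ∉ A := fun hxA => Set.disjoint_left.mp hd hxA hx
    simp [hhB x hx, Set.indicator_of_notMem hxA]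
  have hg2A : ∀ x ∈ A, (1 - hAB x) - B.indicator (fun _ => (1:ℝ)) x = 0 := by
    intro x hx
    have hxB : x ∉ B := fun hxB => Set.disjoint_left.mp hd hx hxB
    simp [hhA x hx, Set.indicator_of_notMem hxB]
  have hg2B : ∀ x ∈ B, (1 - hAB x) - B.indicator (fun _ => (1:ℝ)) x = 0 := by
    intro x hx; simp [hhB x hx, Set.indicator_of_mem hx]
  have hmemAB : hAB ∈ VAB A B K := ⟨hhm, hhA, hhB, hh01, hhfin⟩
  -- square-integrability of the perturbation increments
  have hsq : ∀ (u : Ω → ℝ), Measurable u →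
      Integrable (fun p : Ω × Ω => (u p.2 - u p.1) ^ 2) K →
      ∀ (v : Ω → ℝ), Measurable v →
      Integrable (fun p : Ω × Ω => (v p.2 - v p.1) ^ 2) K →
      Integrable (fun p : Ω × Ω => ((u p.2 - v p.2) - (u p.1 - v p.1)) ^ 2) K := by
    intro u hu hiu v hv hiv
    have hm : Measurable fun p : Ω × Ω => ((u p.2 - v p.2) - (u p.1 - v p.1)) ^ 2 :=
      (((hu.comp measurable_snd).sub (hv.comp measurable_snd)).sub
        ((hu.comp measurable_fst).sub (hv.comp measurable_fst))).pow_const 2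
    refine Integrable.mono' ((hiu.add hiv).const_mul 2) hm.aestronglyMeasurable
      (Filter.Eventually.of_forall fun p => ?_)
    show ‖((u p.2 - v p.2) - (u p.1 - v p.1)) ^ 2‖ ≤
      2 * ((u p.2 - u p.1) ^ 2 + (v p.2 - v p.1) ^ 2)
    rw [Real.norm_eq_abs, abs_of_nonneg (sq_nonneg _)]
    nlinarith [sq_nonneg ((u p.2 - u p.1) + (v p.2 - v p.1)), sq_nonneg ((u p.2 - u p.1) - (v p.2 - v p.1))]
    -- cross integrability with indicator increments
  have hcrossInd : ∀ C : Set Ω, MeasurableSet C →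
      Integrable (fun p : Ω × Ω =>
        (C.indicator (fun _ => (1:ℝ)) p.2 - C.indicator (fun _ => (1:ℝ)) p.1) ^ 2) K →
      Integrable (fun p : Ω × Ω => (hAB p.2 - hAB p.1)
        * (C.indicator (fun _ => (1:ℝ)) p.2 - C.indicator (fun _ => (1:ℝ)) p.1)) K := by
    intro C hC hCsq
    have hi : Measurable (C.indicator (fun _ => (1:ℝ))) := measurable_const.indicator hC
    have hm : Measurable fun p : Ω × Ω => (hAB p.2 - hAB p.1)
        * (C.indicator (fun _ => (1:ℝ)) p.2 - C.indicator (fun _ => (1:ℝ)) p.1) :=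
      hGmeas.mul ((hi.comp measurable_snd).sub (hi.comp measurable_fst))
    refine Integrable.mono' ((hh2.add hCsq).const_mul 2⁻¹) hm.aestronglyMeasurable
      (Filter.Eventually.of_forall fun p => ?_)
    show ‖(hAB p.2 - hAB p.1)
        * (C.indicator (fun _ => (1:ℝ)) p.2 - C.indicator (fun _ => (1:ℝ)) p.1)‖ ≤
      2⁻¹ * ((hAB p.2 - hAB p.1) ^ 2
        + (C.indicator (fun _ => (1:ℝ)) p.2 - C.indicator (fun _ => (1:ℝ)) p.1) ^ 2)
    rw [Real.norm_eq_abs, abs_mul]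
    nlinarith [sq_nonneg (|hAB p.2 - hAB p.1|
        - |C.indicator (fun _ => (1:ℝ)) p.2 - C.indicator (fun _ => (1:ℝ)) p.1|),
      sq_abs (hAB p.2 - hAB p.1),
      sq_abs (C.indicator (fun _ => (1:ℝ)) p.2 - C.indicator (fun _ => (1:ℝ)) p.1)]
  have hcrossIndA := hcrossInd A hA hIndSqA
  have hcrossIndB := hcrossInd B hB hIndSqB
  set e : ℝ := ∫ p : Ω × Ω, (hAB p.2 - hAB p.1) ^ 2 ∂K with he
  have capToReal : (Cap A B K).toReal = 2⁻¹ * e := by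
    rw [← hABmin, dirichletForm_toReal K hh2]
  -- A part
  have crossA : ∫ p : Ω × Ω, (hAB p.2 - hAB p.1)
      * ((fun x => hAB x - A.indicator (fun _ => (1:ℝ)) x) p.2
        - (fun x => hAB x - A.indicator (fun _ => (1:ℝ)) x) p.1) ∂K = 0 :=
    cross_zero K A B hAB hmemAB hABmin (fun x => hAB x - A.indicator (fun _ => (1:ℝ)) x)
      (hhm.sub (measurable_const.indicator hA)) hgA hgB
      (hsq hAB hhm hh2 (A.indicator (fun _ => (1:ℝ))) (measurable_const.indicator hA) hIndSqA)
  have splitA : ∫ p : Ω × Ω, (hAB p.2 - hAB p.1)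
      * ((fun x => hAB x - A.indicator (fun _ => (1:ℝ)) x) p.2
        - (fun x => hAB x - A.indicator (fun _ => (1:ℝ)) x) p.1) ∂K
      = e - ∫ p : Ω × Ω, (hAB p.2 - hAB p.1)
          * (A.indicator (fun _ => (1:ℝ)) p.2 - A.indicator (fun _ => (1:ℝ)) p.1) ∂K := by
    rw [he, ← integral_sub hh2 hcrossIndA]
    exact integral_congr_ae (Filter.Eventually.of_forall fun p => by simp only []; ring)
  have TA : ∫ p, (hAB p.1 - hAB p.2) ∂(K.restrict (A ×ˢ univ)) = 2⁻¹ * e := by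
    have h0 : (0:ℝ) = e - 2 * ∫ p, (hAB p.1 - hAB p.2) ∂(K.restrict (A ×ˢ univ)) := by
      rw [← indA, ← splitA, crossA]
    linarith
  -- B part
  have hu2 : Integrable (fun p : Ω × Ω =>
      ((fun x => 1 - hAB x) p.2 - (fun x => 1 - hAB x) p.1) ^ 2) K :=
    hh2.congr (Filter.Eventually.of_forall fun p => by simp only []; ring)
  have crossB : ∫ p : Ω × Ω, (hAB p.2 - hAB p.1)
      * ((fun x => (1 - hAB x) - B.indicator (fun _ => (1:ℝ)) x) p.2
        - (fun x => (1 - hAB x) - B.indicator (fun _ => (1:ℝ)) x) p.1) ∂K = 0 :=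
    cross_zero K A B hAB hmemAB hABmin
      (fun x => (1 - hAB x) - B.indicator (fun _ => (1:ℝ)) x)
      ((measurable_const.sub hhm).sub (measurable_const.indicator hB)) hg2A hg2B
      (hsq (fun x => 1 - hAB x) (measurable_const.sub hhm) hu2
        (B.indicator (fun _ => (1:ℝ))) (measurable_const.indicator hB) hIndSqB)
  have splitB : ∫ p : Ω × Ω, (hAB p.2 - hAB p.1)
      * ((fun x => (1 - hAB x) - B.indicator (fun _ => (1:ℝ)) x) p.2
        - (fun x => (1 - hAB x) - B.indicator (fun _ => (1:ℝ)) x) p.1) ∂K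
      = -e - ∫ p : Ω × Ω, (hAB p.2 - hAB p.1)
          * (B.indicator (fun _ => (1:ℝ)) p.2 - B.indicator (fun _ => (1:ℝ)) p.1) ∂K := by
    have hpt : ∀ p : Ω × Ω, (hAB p.2 - hAB p.1)
        * ((fun x => (1 - hAB x) - B.indicator (fun _ => (1:ℝ)) x) p.2
          - (fun x => (1 - hAB x) - B.indicator (fun _ => (1:ℝ)) x) p.1)
        = -((hAB p.2 - hAB p.1) ^ 2) - (hAB p.2 - hAB p.1)
            * (B.indicator (fun _ => (1:ℝ)) p.2 - B.indicator (fun _ => (1:ℝ)) p.1) := by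
      intro p; simp only []; ring
    have hnegInt : Integrable (fun p : Ω × Ω => -((hAB p.2 - hAB p.1) ^ 2)) K := hh2.neg
    rw [integral_congr_ae (Filter.Eventually.of_forall hpt),
      integral_sub hnegInt hcrossIndB, integral_neg, he]
  have TB : ∫ p, (hAB p.1 - hAB p.2) ∂(K.restrict (B ×ˢ univ)) = -(2⁻¹ * e) := by
    have h0 : (0:ℝ) = -e - 2 * ∫ p, (hAB p.1 - hAB p.2) ∂(K.restrict (B ×ˢ univ)) := by
      rw [← indB, ← splitB, crossB]
    linarith
  exact ⟨by rw [fubA, TA, capToReal], by rw [fubB, TB, capToReal]⟩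
end
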